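/- arXiv:1812.07655 — 3 statements merged into one kernel-verified Lean document; each statement's English description precedes it below -/
import Mathlib

section
/- Let B be a k-algebra, N a B-bimodule, and T = T_B(N). The sequence of T-bimodules 0 → T ⊗_B N ⊗_B T →^g T ⊗_B T →^f T → 0, where f is the multiplication of T and g(x ⊗ n ⊗ y) = xn ⊗ y − x ⊗ ny, is a relative projective resolution of T as a T-bimodule with respect to the subalgebra B ⊗ T^{op} of T ⊗ T^{op}: the bimodules T ⊗_B T and T ⊗_B N ⊗_B T are relatively projective, fg = 0, and there exist B−T-bimodule maps s : T → T ⊗_B T and r : T ⊗_B T → T ⊗_B N ⊗_B T with fs = 1, rg = 1 and gr + sf = 1. -/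
/-!
STATEMENT 4: Let B be a k-algebra, N a B-bimodule, and T = T_B(N). The sequence of
T-bimodules 0 → T ⊗_B N ⊗_B T →g T ⊗_B T →f T → 0, where f is the multiplication of T and
g(x ⊗ n ⊗ y) = xn ⊗ y − x ⊗ ny, is a relative projective resolution of T as a T-bimodule with
respect to the subalgebra B ⊗ T^op of T ⊗ T^op: the bimodules T ⊗_B T and T ⊗_B N ⊗_B T are
relatively projective, fg = 0, and there exist B−T-bimodule maps s : T → T ⊗_B T and
r : T ⊗_B T → T ⊗_B N ⊗_B T with fs = 1, rg = 1 and gr + sf = 1.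
(The relative tensor products are characterized by their universal properties; a T-bimodule is
relatively projective with respect to B ⊗ T^op when it is a direct summand of an extended
bimodule T ⊗_B U for some B−T-bimodule U.)
-/

set_option linter.unusedSectionVars false

open scoped TensorProduct
noncomputable section

section TensorAlgebra
variable (K : Type) [Field K] (B : Type) [Ring B] [Algebra K B]
variable (N : Type) [AddCommGroup N] [Module K N] [Module B N] [Module Bᵐᵒᵖ N]
  [SMulCommClass B Bᵐᵒᵖ N] [IsScalarTower K B N] [IsScalarTower K Bᵐᵒᵖ N]

/-- The relations presenting the tensor algebra `T_B(N)` of a `B`-bimodule `N` as a quotient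
of the free `k`-algebra on `B ⊕ N`:  the inclusion of `B` is a `k`-algebra morphism, the
inclusion of `N` is `k`-linear, and multiplication by `B` on either side of (the image of) `N`
is given by the bimodule actions.  This presents the `k`-algebra freely generated by the
algebra `B` and the `B`-bimodule `N`, i.e. the tensor algebra
`T_B(N) = B ⊕ N ⊕ (N ⊗_B N) ⊕ ⋯`. -/
inductive TensRel : FreeAlgebra K (B ⊕ N) → FreeAlgebra K (B ⊕ N) → Prop
  | b_add (b b' : B) : TensRel (FreeAlgebra.ι K (Sum.inl (b + b')))
      (FreeAlgebra.ι K (Sum.inl b) + FreeAlgebra.ι K (Sum.inl b'))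
  | b_smul (c : K) (b : B) : TensRel (FreeAlgebra.ι K (Sum.inl (c • b)))
      (c • FreeAlgebra.ι K (Sum.inl b))
  | b_mul (b b' : B) : TensRel (FreeAlgebra.ι K (Sum.inl (b * b')))
      (FreeAlgebra.ι K (Sum.inl b) * FreeAlgebra.ι K (Sum.inl b'))
  | b_one : TensRel (FreeAlgebra.ι K (Sum.inl 1)) 1
  | n_add (n n' : N) : TensRel (FreeAlgebra.ι K (Sum.inr (n + n')))
      (FreeAlgebra.ι K (Sum.inr n) + FreeAlgebra.ι K (Sum.inr n'))
  | n_smul (c : K) (n : N) : TensRel (FreeAlgebra.ι K (Sum.inr (c • n)))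
      (c • FreeAlgebra.ι K (Sum.inr n))
  | act_left (b : B) (n : N) : TensRel
      (FreeAlgebra.ι K (Sum.inl b) * FreeAlgebra.ι K (Sum.inr n))
      (FreeAlgebra.ι K (Sum.inr (b • n)))
  | act_right (b : B) (n : N) : TensRel
      (FreeAlgebra.ι K (Sum.inr n) * FreeAlgebra.ι K (Sum.inl b))
      (FreeAlgebra.ι K (Sum.inr (MulOpposite.op b • n)))

/-- The tensor algebra `T_B(N)` of the `B`-bimodule `N`. -/
abbrev TensorAlg : Type := RingQuot (TensRel K B N)

/-- The canonical algebra morphism `B → T_B(N)`. -/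
def TensorAlg.ofB : B →ₐ[K] TensorAlg K B N where
  toFun b := RingQuot.mkAlgHom K (TensRel K B N) (FreeAlgebra.ι K (Sum.inl b))
  map_one' := by
    show RingQuot.mkAlgHom K (TensRel K B N) (FreeAlgebra.ι K (Sum.inl 1)) = 1
    rw [RingQuot.mkAlgHom_rel K
      (show TensRel K B N (FreeAlgebra.ι K (Sum.inl 1)) 1 from TensRel.b_one), map_one]
  map_mul' b b' := by
    show RingQuot.mkAlgHom K (TensRel K B N) (FreeAlgebra.ι K (Sum.inl (b * b')))
      = RingQuot.mkAlgHom K (TensRel K B N) (FreeAlgebra.ι K (Sum.inl b))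
        * RingQuot.mkAlgHom K (TensRel K B N) (FreeAlgebra.ι K (Sum.inl b'))
    rw [RingQuot.mkAlgHom_rel K (TensRel.b_mul b b'), map_mul]
  map_zero' := by
    show RingQuot.mkAlgHom K (TensRel K B N) (FreeAlgebra.ι K (Sum.inl 0)) = 0
    have h := RingQuot.mkAlgHom_rel K
      (show TensRel K B N (FreeAlgebra.ι K (Sum.inl ((0:K) • (0:B))))
          ((0:K) • FreeAlgebra.ι K (Sum.inl (0:B))) from TensRel.b_smul 0 0)
    simpa using h
  map_add' b b' := by
    show RingQuot.mkAlgHom K (TensRel K B N) (FreeAlgebra.ι K (Sum.inl (b + b')))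
      = RingQuot.mkAlgHom K (TensRel K B N) (FreeAlgebra.ι K (Sum.inl b))
        + RingQuot.mkAlgHom K (TensRel K B N) (FreeAlgebra.ι K (Sum.inl b'))
    rw [RingQuot.mkAlgHom_rel K (TensRel.b_add b b'), map_add]
  commutes' c := by
    show RingQuot.mkAlgHom K (TensRel K B N) (FreeAlgebra.ι K (Sum.inl (algebraMap K B c)))
      = algebraMap K (TensorAlg K B N) c
    have h1 := RingQuot.mkAlgHom_rel K
      (show TensRel K B N (FreeAlgebra.ι K (Sum.inl (c • (1:B))))
          (c • FreeAlgebra.ι K (Sum.inl (1:B))) from TensRel.b_smul c 1)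
    have h2 := RingQuot.mkAlgHom_rel K
      (show TensRel K B N (FreeAlgebra.ι K (Sum.inl 1)) 1 from TensRel.b_one)
    have h3 : algebraMap K B c = c • (1 : B) := Algebra.algebraMap_eq_smul_one c
    rw [h3, h1, map_smul, h2, map_one, Algebra.algebraMap_eq_smul_one]

/-- The canonical `k`-linear map `N → T_B(N)`. -/
def TensorAlg.ofN : N →ₗ[K] TensorAlg K B N where
  toFun n := RingQuot.mkAlgHom K (TensRel K B N) (FreeAlgebra.ι K (Sum.inr n))
  map_add' n n' := by
    show RingQuot.mkAlgHom K (TensRel K B N) (FreeAlgebra.ι K (Sum.inr (n + n')))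
      = RingQuot.mkAlgHom K (TensRel K B N) (FreeAlgebra.ι K (Sum.inr n))
        + RingQuot.mkAlgHom K (TensRel K B N) (FreeAlgebra.ι K (Sum.inr n'))
    rw [RingQuot.mkAlgHom_rel K (TensRel.n_add n n'), map_add]
  map_smul' c n := by
    show RingQuot.mkAlgHom K (TensRel K B N) (FreeAlgebra.ι K (Sum.inr (c • n)))
      = c • RingQuot.mkAlgHom K (TensRel K B N) (FreeAlgebra.ι K (Sum.inr n))
    rw [RingQuot.mkAlgHom_rel K (TensRel.n_smul c n), map_smul]

set_option linter.unusedSectionVars false in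
theorem TensorAlg.ofB_mul_ofN (b : B) (n : N) :
    TensorAlg.ofB K B N b * TensorAlg.ofN K B N n = TensorAlg.ofN K B N (b • n) := by
  show RingQuot.mkAlgHom K (TensRel K B N) _ * RingQuot.mkAlgHom K (TensRel K B N) _ = _
  rw [← map_mul, RingQuot.mkAlgHom_rel K (TensRel.act_left b n)]; rfl

set_option linter.unusedSectionVars false in
theorem TensorAlg.ofN_mul_ofB (b : B) (n : N) :
    TensorAlg.ofN K B N n * TensorAlg.ofB K B N b
      = TensorAlg.ofN K B N (MulOpposite.op b • n) := by
  show RingQuot.mkAlgHom K (TensRel K B N) _ * RingQuot.mkAlgHom K (TensRel K B N) _ = _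
  rw [← map_mul, RingQuot.mkAlgHom_rel K (TensRel.act_right b n)]; rfl

end TensorAlgebra

section Statement4
variable (K : Type) [Field K] (B : Type) [Ring B] [Algebra K B]
variable (N : Type) [AddCommGroup N] [Module K N] [Module B N] [Module Bᵐᵒᵖ N]
  [SMulCommClass B Bᵐᵒᵖ N] [IsScalarTower K B N] [IsScalarTower K Bᵐᵒᵖ N]

/-- A bundled `B−T`-bimodule (left `B`-module, right `T`-module). -/
structure BTBimod : Type 1 where
  U : Type
  [ag : AddCommGroup U]
  [mdk : Module K U]
  [mb : Module B U]
  [mt : Module (TensorAlg K B N)ᵐᵒᵖ U]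

attribute [instance] BTBimod.ag BTBimod.mdk BTBimod.mb BTBimod.mt

/-- A bundled `T`-bimodule. -/
structure TBimod : Type 1 where
  X : Type
  [ag : AddCommGroup X]
  [mdk : Module K X]
  [ml : Module (TensorAlg K B N) X]
  [mr : Module (TensorAlg K B N)ᵐᵒᵖ X]

attribute [instance] TBimod.ag TBimod.mdk TBimod.ml TBimod.mr

/-- `(E, σ)` realizes the extended `T`-bimodule `T ⊗_B U` of a `B−T`-bimodule `U`:
`σ` is the universal `K`-bilinear `B`-balanced map, the left `T`-action acts on the left
factor and the right `T`-action on `U`. -/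
def RealizesExtended (Wu : BTBimod K B N) (E : Type) [AddCommGroup E] [Module K E]
    [Module (TensorAlg K B N) E] [Module (TensorAlg K B N)ᵐᵒᵖ E]
    (σ : TensorAlg K B N → Wu.U → E) : Prop :=
  (∀ (c : K) (x x' : TensorAlg K B N) (u : Wu.U),
    σ (c • x + x') u = c • σ x u + σ x' u) ∧
  (∀ (c : K) (x : TensorAlg K B N) (u u' : Wu.U),
    σ x (c • u + u') = c • σ x u + σ x u') ∧
  (∀ (x : TensorAlg K B N) (b : B) (u : Wu.U),
    σ (x * TensorAlg.ofB K B N b) u = σ x (b • u)) ∧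
  (∀ (a x : TensorAlg K B N) (u : Wu.U), a • σ x u = σ (a * x) u) ∧
  (∀ (a : (TensorAlg K B N)ᵐᵒᵖ) (x : TensorAlg K B N) (u : Wu.U),
    a • σ x u = σ x (a • u)) ∧
  (∀ (Z : Type) [AddCommGroup Z] [Module K Z] (φ : TensorAlg K B N → Wu.U → Z),
    (∀ (c : K) (x x' : TensorAlg K B N) (u : Wu.U),
      φ (c • x + x') u = c • φ x u + φ x' u) →
    (∀ (c : K) (x : TensorAlg K B N) (u u' : Wu.U),
      φ x (c • u + u') = c • φ x u + φ x u') →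
    (∀ (x : TensorAlg K B N) (b : B) (u : Wu.U),
      φ (x * TensorAlg.ofB K B N b) u = φ x (b • u)) →
    ∃! ψ : E →ₗ[K] Z, ∀ x u, ψ (σ x u) = φ x u)

/-- A `T`-bimodule `P` is relatively projective with respect to `B ⊗ Tᵒᵖ ⊆ T ⊗ Tᵒᵖ`:
it is a direct summand (through `T`-bimodule maps) of an extended bimodule `T ⊗_B U`
for some `B−T`-bimodule `U`. -/
def IsRelProjTBimod (P : Type) [AddCommGroup P] [Module K P]
    [Module (TensorAlg K B N) P] [Module (TensorAlg K B N)ᵐᵒᵖ P] : Prop :=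
  ∃ (Wu : BTBimod K B N) (E : TBimod K B N) (σ : TensorAlg K B N → Wu.U → E.X),
    RealizesExtended K B N Wu E.X σ ∧
    ∃ (i : P →ₗ[K] E.X) (π : E.X →ₗ[K] P),
      (∀ (a : TensorAlg K B N) (p : P), i (a • p) = a • i p) ∧
      (∀ (a : (TensorAlg K B N)ᵐᵒᵖ) (p : P), i (a • p) = a • i p) ∧
      (∀ (a : TensorAlg K B N) (z : E.X), π (a • z) = a • π z) ∧
      (∀ (a : (TensorAlg K B N)ᵐᵒᵖ) (z : E.X), π (a • z) = a • π z) ∧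
      (∀ p, π (i p) = p)

/-- `(P2, σ2)` realizes the `T`-bimodule `T ⊗_B T`. -/
def RealizesTT (P2 : Type) [AddCommGroup P2] [Module K P2]
    [Module (TensorAlg K B N) P2] [Module (TensorAlg K B N)ᵐᵒᵖ P2]
    (σ2 : TensorAlg K B N → TensorAlg K B N → P2) : Prop :=
  (∀ (c : K) (x x' y : TensorAlg K B N), σ2 (c • x + x') y = c • σ2 x y + σ2 x' y) ∧
  (∀ (c : K) (x y y' : TensorAlg K B N), σ2 x (c • y + y') = c • σ2 x y + σ2 x y') ∧
  (∀ (x y : TensorAlg K B N) (b : B),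
    σ2 (x * TensorAlg.ofB K B N b) y = σ2 x (TensorAlg.ofB K B N b * y)) ∧
  (∀ (a x y : TensorAlg K B N), a • σ2 x y = σ2 (a * x) y) ∧
  (∀ (a : (TensorAlg K B N)ᵐᵒᵖ) (x y : TensorAlg K B N),
    a • σ2 x y = σ2 x (y * a.unop)) ∧
  (∀ (Z : Type) [AddCommGroup Z] [Module K Z] (φ : TensorAlg K B N → TensorAlg K B N → Z),
    (∀ (c : K) (x x' y : TensorAlg K B N), φ (c • x + x') y = c • φ x y + φ x' y) →
    (∀ (c : K) (x y y' : TensorAlg K B N), φ x (c • y + y') = c • φ x y + φ x y') →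
    (∀ (x y : TensorAlg K B N) (b : B),
      φ (x * TensorAlg.ofB K B N b) y = φ x (TensorAlg.ofB K B N b * y)) →
    ∃! ψ : P2 →ₗ[K] Z, ∀ x y, ψ (σ2 x y) = φ x y)

/-- `(P3, σ3)` realizes the `T`-bimodule `T ⊗_B N ⊗_B T`. -/
def RealizesTNT (P3 : Type) [AddCommGroup P3] [Module K P3]
    [Module (TensorAlg K B N) P3] [Module (TensorAlg K B N)ᵐᵒᵖ P3]
    (σ3 : TensorAlg K B N → N → TensorAlg K B N → P3) : Prop :=
  (∀ (c : K) (x x' y : TensorAlg K B N) (n : N),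
    σ3 (c • x + x') n y = c • σ3 x n y + σ3 x' n y) ∧
  (∀ (c : K) (x y : TensorAlg K B N) (n n' : N),
    σ3 x (c • n + n') y = c • σ3 x n y + σ3 x n' y) ∧
  (∀ (c : K) (x y y' : TensorAlg K B N) (n : N),
    σ3 x n (c • y + y') = c • σ3 x n y + σ3 x n y') ∧
  (∀ (x y : TensorAlg K B N) (b : B) (n : N),
    σ3 (x * TensorAlg.ofB K B N b) n y = σ3 x (b • n) y) ∧
  (∀ (x y : TensorAlg K B N) (b : B) (n : N),
    σ3 x (MulOpposite.op b • n) y = σ3 x n (TensorAlg.ofB K B N b * y)) ∧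
  (∀ (a x y : TensorAlg K B N) (n : N), a • σ3 x n y = σ3 (a * x) n y) ∧
  (∀ (a : (TensorAlg K B N)ᵐᵒᵖ) (x y : TensorAlg K B N) (n : N),
    a • σ3 x n y = σ3 x n (y * a.unop)) ∧
  (∀ (Z : Type) [AddCommGroup Z] [Module K Z]
      (φ : TensorAlg K B N → N → TensorAlg K B N → Z),
    (∀ (c : K) (x x' y : TensorAlg K B N) (n : N),
      φ (c • x + x') n y = c • φ x n y + φ x' n y) →
    (∀ (c : K) (x y : TensorAlg K B N) (n n' : N),
      φ x (c • n + n') y = c • φ x n y + φ x n' y) →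
    (∀ (c : K) (x y y' : TensorAlg K B N) (n : N),
      φ x n (c • y + y') = c • φ x n y + φ x n y') →
    (∀ (x y : TensorAlg K B N) (b : B) (n : N),
      φ (x * TensorAlg.ofB K B N b) n y = φ x (b • n) y) →
    (∀ (x y : TensorAlg K B N) (b : B) (n : N),
      φ x (MulOpposite.op b • n) y = φ x n (TensorAlg.ofB K B N b * y)) →
    ∃! ψ : P3 →ₗ[K] Z, ∀ x n y, ψ (σ3 x n y) = φ x n y)

end Statement4

section AuxProof
variable {K : Type} [Field K] {B : Type} [Ring B] [Algebra K B]
variable {N : Type} [AddCommGroup N] [Module K N] [Module B N] [Module Bᵐᵒᵖ N]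
  [SMulCommClass B Bᵐᵒᵖ N] [IsScalarTower K B N] [IsScalarTower K Bᵐᵒᵖ N]
variable {P2 : Type} [AddCommGroup P2] [Module K P2]
  [Module (TensorAlg K B N) P2] [Module (TensorAlg K B N)ᵐᵒᵖ P2]
  {σ2 : TensorAlg K B N → TensorAlg K B N → P2}
variable {P3 : Type} [AddCommGroup P3] [Module K P3]
  [Module (TensorAlg K B N) P3] [Module (TensorAlg K B N)ᵐᵒᵖ P3]
  {σ3 : TensorAlg K B N → N → TensorAlg K B N → P3}

namespace Aux4

/-! ### basic linearity consequences for `σ2` -/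

theorem s2_addl (h2 : RealizesTT K B N P2 σ2) (x x' y : TensorAlg K B N) :
    σ2 (x + x') y = σ2 x y + σ2 x' y := by
  have := h2.1 1 x x' y; simpa using this

theorem s2_zerol (h2 : RealizesTT K B N P2 σ2) (y : TensorAlg K B N) :
    σ2 0 y = 0 := by
  have := s2_addl h2 0 0 y; simpa using this.symm

theorem s2_smull (h2 : RealizesTT K B N P2 σ2) (c : K) (x y : TensorAlg K B N) :
    σ2 (c • x) y = c • σ2 x y := by
  have := h2.1 c x 0 y; simpa [s2_zerol h2] using this

theorem s2_addr (h2 : RealizesTT K B N P2 σ2) (x y y' : TensorAlg K B N) :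
    σ2 x (y + y') = σ2 x y + σ2 x y' := by
  have := h2.2.1 1 x y y'; simpa using this

theorem s2_zeror (h2 : RealizesTT K B N P2 σ2) (x : TensorAlg K B N) :
    σ2 x 0 = 0 := by
  have := s2_addr h2 x 0 0; simpa using this.symm

theorem s2_smulr (h2 : RealizesTT K B N P2 σ2) (c : K) (x y : TensorAlg K B N) :
    σ2 x (c • y) = c • σ2 x y := by
  have := h2.2.1 c x y 0; simpa [s2_zeror h2] using this

/-! ### basic linearity consequences for `σ3` -/

theorem s3_add1 (h3 : RealizesTNT K B N P3 σ3) (x x' y : TensorAlg K B N) (n : N) :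
    σ3 (x + x') n y = σ3 x n y + σ3 x' n y := by
  have := h3.1 1 x x' y n; simpa using this

theorem s3_zero1 (h3 : RealizesTNT K B N P3 σ3) (y : TensorAlg K B N) (n : N) :
    σ3 0 n y = 0 := by
  have := s3_add1 h3 0 0 y n; simpa using this.symm

theorem s3_smul1 (h3 : RealizesTNT K B N P3 σ3) (c : K) (x y : TensorAlg K B N) (n : N) :
    σ3 (c • x) n y = c • σ3 x n y := by
  have := h3.1 c x 0 y n; simpa [s3_zero1 h3] using this

theorem s3_add2 (h3 : RealizesTNT K B N P3 σ3) (x y : TensorAlg K B N) (n n' : N) :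
    σ3 x (n + n') y = σ3 x n y + σ3 x n' y := by
  have := h3.2.1 1 x y n n'; simpa using this

theorem s3_zero2 (h3 : RealizesTNT K B N P3 σ3) (x y : TensorAlg K B N) :
    σ3 x 0 y = 0 := by
  have := s3_add2 h3 x y 0 0; simpa using this.symm

theorem s3_smul2 (h3 : RealizesTNT K B N P3 σ3) (c : K) (x y : TensorAlg K B N) (n : N) :
    σ3 x (c • n) y = c • σ3 x n y := by
  have := h3.2.1 c x y n 0; simpa [s3_zero2 h3] using this

theorem s3_add3 (h3 : RealizesTNT K B N P3 σ3) (x y y' : TensorAlg K B N) (n : N) :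
    σ3 x n (y + y') = σ3 x n y + σ3 x n y' := by
  have := h3.2.2.1 1 x y y' n; simpa using this

theorem s3_zero3 (h3 : RealizesTNT K B N P3 σ3) (x : TensorAlg K B N) (n : N) :
    σ3 x n 0 = 0 := by
  have := s3_add3 h3 x 0 0 n; simpa using this.symm

theorem s3_smul3 (h3 : RealizesTNT K B N P3 σ3) (c : K) (x y : TensorAlg K B N) (n : N) :
    σ3 x n (c • y) = c • σ3 x n y := by
  have := h3.2.2.1 c x y 0 n; simpa [s3_zero3 h3] using this

/-! ### the images of `σ2`, `σ3` span -/

theorem span2_top (h2 : RealizesTT K B N P2 σ2) :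
    Submodule.span K {z : P2 | ∃ x y, σ2 x y = z} = ⊤ := by
  set S := Submodule.span K {z : P2 | ∃ x y, σ2 x y = z} with hS
  obtain ⟨ψ, -, huniq⟩ := h2.2.2.2.2.2 (P2 ⧸ S) (fun _ _ => (0 : P2 ⧸ S))
    (by intros; simp) (by intros; simp) (by intros; rfl)
  have h1 : S.mkQ = ψ := huniq S.mkQ (fun x y => by
    simp only [Submodule.mkQ_apply, Submodule.Quotient.mk_eq_zero]
    exact Submodule.subset_span ⟨x, y, rfl⟩)
  have h0 : (0 : P2 →ₗ[K] P2 ⧸ S) = ψ := huniq 0 (fun _ _ => rfl)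
  rw [Submodule.eq_top_iff']
  intro z
  have : S.mkQ z = 0 := by rw [h1, ← h0]; rfl
  simpa [Submodule.Quotient.mk_eq_zero] using this

theorem span3_top (h3 : RealizesTNT K B N P3 σ3) :
    Submodule.span K {z : P3 | ∃ x n y, σ3 x n y = z} = ⊤ := by
  set S := Submodule.span K {z : P3 | ∃ x n y, σ3 x n y = z} with hS
  obtain ⟨ψ, -, huniq⟩ := h3.2.2.2.2.2.2.2 (P3 ⧸ S) (fun _ _ _ => (0 : P3 ⧸ S))
    (by intros; simp) (by intros; simp) (by intros; simp) (by intros; rfl) (by intros; rfl)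
  have h1 : S.mkQ = ψ := huniq S.mkQ (fun x n y => by
    simp only [Submodule.mkQ_apply, Submodule.Quotient.mk_eq_zero]
    exact Submodule.subset_span ⟨x, n, y, rfl⟩)
  have h0 : (0 : P3 →ₗ[K] P3 ⧸ S) = ψ := huniq 0 (fun _ _ _ => rfl)
  rw [Submodule.eq_top_iff']
  intro z
  have : S.mkQ z = 0 := by rw [h1, ← h0]; rfl
  simpa [Submodule.Quotient.mk_eq_zero] using this

/-- extensionality via the spanning set of `P2` -/
theorem ext2 (h2 : RealizesTT K B N P2 σ2) {Z : Type} [AddCommGroup Z] [Module K Z]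
    (f g : P2 →ₗ[K] Z) (h : ∀ x y, f (σ2 x y) = g (σ2 x y)) : f = g :=
  LinearMap.ext_on (span2_top h2) (by rintro z ⟨x, y, rfl⟩; exact h x y)

/-- extensionality via the spanning set of `P3` -/
theorem ext3 (h3 : RealizesTNT K B N P3 σ3) {Z : Type} [AddCommGroup Z] [Module K Z]
    (f g : P3 →ₗ[K] Z) (h : ∀ x n y, f (σ3 x n y) = g (σ3 x n y)) : f = g :=
  LinearMap.ext_on (span3_top h3) (by rintro z ⟨x, n, y, rfl⟩; exact h x n y)

end Aux4
end AuxProof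
section AuxProof2
variable {K : Type} [Field K] {B : Type} [Ring B] [Algebra K B]
variable {N : Type} [AddCommGroup N] [Module K N] [Module B N] [Module Bᵐᵒᵖ N]
  [SMulCommClass B Bᵐᵒᵖ N] [IsScalarTower K B N] [IsScalarTower K Bᵐᵒᵖ N]
variable {P2 : Type} [AddCommGroup P2] [Module K P2]
  [Module (TensorAlg K B N) P2] [Module (TensorAlg K B N)ᵐᵒᵖ P2]
  {σ2 : TensorAlg K B N → TensorAlg K B N → P2}
variable {P3 : Type} [AddCommGroup P3] [Module K P3]
  [Module (TensorAlg K B N) P3] [Module (TensorAlg K B N)ᵐᵒᵖ P3]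
  {σ3 : TensorAlg K B N → N → TensorAlg K B N → P3}

namespace Aux4

/-- generic induction principle on `P2` -/
theorem ind2 (h2 : RealizesTT K B N P2 σ2) {C : P2 → Prop}
    (hgen : ∀ x y, C (σ2 x y)) (h0 : C 0)
    (hadd : ∀ z z', C z → C z' → C (z + z'))
    (hsmul : ∀ (c : K) z, C z → C (c • z)) (z : P2) : C z := by
  have hz : z ∈ Submodule.span K {z : P2 | ∃ x y, σ2 x y = z} := by
    rw [span2_top h2]; trivial
  refine Submodule.span_induction ?_ h0 (fun a b _ _ => hadd a b) (fun c a _ => hsmul c a) hz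
  rintro w ⟨x, y, rfl⟩; exact hgen x y

/-- generic induction principle on `P3` -/
theorem ind3 (h3 : RealizesTNT K B N P3 σ3) {C : P3 → Prop}
    (hgen : ∀ x n y, C (σ3 x n y)) (h0 : C 0)
    (hadd : ∀ z z', C z → C z' → C (z + z'))
    (hsmul : ∀ (c : K) z, C z → C (c • z)) (z : P3) : C z := by
  have hz : z ∈ Submodule.span K {z : P3 | ∃ x n y, σ3 x n y = z} := by
    rw [span3_top h3]; trivial
  refine Submodule.span_induction ?_ h0 (fun a b _ _ => hadd a b) (fun c a _ => hsmul c a) hz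
  rintro w ⟨x, n, y, rfl⟩; exact hgen x n y

theorem P2_smul_comm (h2 : RealizesTT K B N P2 σ2) (a : TensorAlg K B N) (c : K) (z : P2) :
    a • c • z = c • a • z := by
  induction z using ind2 h2 generalizing c with
  | hgen x y => rw [← s2_smull h2 c x y, h2.2.2.2.1 a (c • x) y, h2.2.2.2.1 a x y,
      mul_smul_comm, s2_smull h2]
  | h0 => simp
  | hadd z z' hz hz' => simp [smul_add, hz, hz']
  | hsmul c' z hz => rw [smul_smul, hz, hz c', smul_smul]

theorem P2_opsmul_comm (h2 : RealizesTT K B N P2 σ2) (a : (TensorAlg K B N)ᵐᵒᵖ) (c : K)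
    (z : P2) : a • c • z = c • a • z := by
  induction z using ind2 h2 generalizing c with
  | hgen x y => rw [← s2_smull h2 c x y, h2.2.2.2.2.1 a (c • x) y, h2.2.2.2.2.1 a x y,
      s2_smull h2]
  | h0 => simp
  | hadd z z' hz hz' => simp [smul_add, hz, hz']
  | hsmul c' z hz => rw [smul_smul, hz, hz c', smul_smul]

theorem P3_smul_comm (h3 : RealizesTNT K B N P3 σ3) (a : TensorAlg K B N) (c : K) (z : P3) :
    a • c • z = c • a • z := by
  induction z using ind3 h3 generalizing c with
  | hgen x n y => rw [← s3_smul1 h3 c x y n, h3.2.2.2.2.2.1 a (c • x) y n,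
      h3.2.2.2.2.2.1 a x y n, mul_smul_comm, s3_smul1 h3]
  | h0 => simp
  | hadd z z' hz hz' => simp [smul_add, hz, hz']
  | hsmul c' z hz => rw [smul_smul, hz, hz c', smul_smul]

theorem P3_opsmul_comm (h3 : RealizesTNT K B N P3 σ3) (a : (TensorAlg K B N)ᵐᵒᵖ) (c : K)
    (z : P3) : a • c • z = c • a • z := by
  induction z using ind3 h3 generalizing c with
  | hgen x n y => rw [← s3_smul1 h3 c x y n, h3.2.2.2.2.2.2.1 a (c • x) y n,
      h3.2.2.2.2.2.2.1 a x y n, s3_smul1 h3]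
  | h0 => simp
  | hadd z z' hz hz' => simp [smul_add, hz, hz']
  | hsmul c' z hz => rw [smul_smul, hz, hz c', smul_smul]

theorem P3_op_comm (h3 : RealizesTNT K B N P3 σ3) (t : TensorAlg K B N)
    (a : (TensorAlg K B N)ᵐᵒᵖ) (z : P3) : a • t • z = t • a • z := by
  induction z using ind3 h3 with
  | hgen x n y => rw [h3.2.2.2.2.2.1, h3.2.2.2.2.2.2.1, h3.2.2.2.2.2.2.1, h3.2.2.2.2.2.1]
  | h0 => simp
  | hadd z z' hz hz' => simp [smul_add, hz, hz']
  | hsmul c z hz => rw [P3_smul_comm h3 t c z, P3_opsmul_comm h3 a c (t • z), hz,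
      P3_opsmul_comm h3 a c z, P3_smul_comm h3 t c (a • z)]

theorem P3_algebraMap_smul (h3 : RealizesTNT K B N P3 σ3) (c : K) (z : P3) :
    (algebraMap K (TensorAlg K B N) c) • z = c • z := by
  induction z using ind3 h3 with
  | hgen x n y => rw [h3.2.2.2.2.2.1, ← Algebra.smul_def, s3_smul1 h3]
  | h0 => simp
  | hadd z z' hz hz' => simp [smul_add, hz, hz']
  | hsmul c' z hz => rw [P3_smul_comm h3 _ c' z, hz, smul_comm]

theorem P3_ksmul_assoc (h3 : RealizesTNT K B N P3 σ3) (c : K) (t : TensorAlg K B N) (z : P3) :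
    (c • t) • z = c • t • z := by
  rw [Algebra.smul_def, mul_smul, P3_algebraMap_smul h3]

theorem P2_algebraMap_smul (h2 : RealizesTT K B N P2 σ2) (c : K) (z : P2) :
    (algebraMap K (TensorAlg K B N) c) • z = c • z := by
  induction z using ind2 h2 with
  | hgen x y => rw [h2.2.2.2.1, ← Algebra.smul_def, s2_smull h2]
  | h0 => simp
  | hadd z z' hz hz' => simp [smul_add, hz, hz']
  | hsmul c' z hz => rw [P2_smul_comm h2 _ c' z, hz, smul_comm]

/-- the map `z ↦ a • z` on `P2` as a `K`-linear map -/
def lsmul2 (h2 : RealizesTT K B N P2 σ2) (a : TensorAlg K B N) : P2 →ₗ[K] P2 where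
  toFun z := a • z
  map_add' := smul_add a
  map_smul' c z := P2_smul_comm h2 a c z

def lsmul2op (h2 : RealizesTT K B N P2 σ2) (a : (TensorAlg K B N)ᵐᵒᵖ) : P2 →ₗ[K] P2 where
  toFun z := a • z
  map_add' := smul_add a
  map_smul' c z := P2_opsmul_comm h2 a c z

def lsmul3 (h3 : RealizesTNT K B N P3 σ3) (a : TensorAlg K B N) : P3 →ₗ[K] P3 where
  toFun z := a • z
  map_add' := smul_add a
  map_smul' c z := P3_smul_comm h3 a c z

def lsmul3op (h3 : RealizesTNT K B N P3 σ3) (a : (TensorAlg K B N)ᵐᵒᵖ) : P3 →ₗ[K] P3 where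
  toFun z := a • z
  map_add' := smul_add a
  map_smul' c z := P3_opsmul_comm h3 a c z

end Aux4
end AuxProof2
section AuxProof3
variable (K : Type) [Field K] (B : Type) [Ring B] [Algebra K B]
variable (N : Type) [AddCommGroup N] [Module K N] [Module B N] [Module Bᵐᵒᵖ N]
  [SMulCommClass B Bᵐᵒᵖ N] [IsScalarTower K B N] [IsScalarTower K Bᵐᵒᵖ N]

namespace Aux4

/-- `T` as a left `B`-module via the inclusion `ofB`. -/
def TmodB : Module B (TensorAlg K B N) :=
  Module.compHom _ (TensorAlg.ofB K B N).toRingHom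

theorem TmodB_smul (b : B) (x : TensorAlg K B N) :
    (letI := TmodB K B N; b • x) = TensorAlg.ofB K B N b * x := rfl

variable {K B N}
variable {P2 : Type} [AddCommGroup P2] [Module K P2]
  [Module (TensorAlg K B N) P2] [Module (TensorAlg K B N)ᵐᵒᵖ P2]
  {σ2 : TensorAlg K B N → TensorAlg K B N → P2}

theorem relproj2 (h2 : RealizesTT K B N P2 σ2) : IsRelProjTBimod K B N P2 := by
  refine ⟨{ U := TensorAlg K B N, mb := TmodB K B N }, { X := P2 }, σ2,
    ⟨h2.1, h2.2.1, fun x b u => h2.2.2.1 x u b, h2.2.2.2.1,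
      fun a x u => (h2.2.2.2.2.1 a x u).trans rfl,
      fun Z _ _ φ hφ1 hφ2 hφ3 => h2.2.2.2.2.2 Z φ hφ1 hφ2 (fun x y b => hφ3 x b y)⟩,
    LinearMap.id, LinearMap.id, fun _ _ => rfl, fun _ _ => rfl, fun _ _ => rfl,
    fun _ _ => rfl, fun _ => rfl⟩

end Aux4
end AuxProof3
section AuxProof4
variable (K : Type) [Field K] (B : Type) [Ring B] [Algebra K B]
variable (N : Type) [AddCommGroup N] [Module K N] [Module B N] [Module Bᵐᵒᵖ N]
  [SMulCommClass B Bᵐᵒᵖ N] [IsScalarTower K B N] [IsScalarTower K Bᵐᵒᵖ N]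

namespace Aux4

theorem N_smul_comm (c : K) (b : B) (n : N) : b • c • n = c • b • n := by
  have h1 : (c : K) • n = (c • (1 : B)) • n := by rw [smul_assoc, one_smul]
  rw [h1, ← mul_smul, mul_smul_comm, mul_one, smul_assoc]

/-- `n ↦ b • n` as a `K`-linear map. -/
def bSmulLin (b : B) : N →ₗ[K] N where
  toFun n := b • n
  map_add' := smul_add b
  map_smul' c n := N_smul_comm K B N c b n

/-- The submodule of `B`-balancing relations in `N ⊗[K] T`. -/
def balRel : Submodule K (N ⊗[K] TensorAlg K B N) :=
  Submodule.span K {z | ∃ (b : B) (n : N) (y : TensorAlg K B N),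
    z = (MulOpposite.op b • n) ⊗ₜ[K] y - n ⊗ₜ[K] (TensorAlg.ofB K B N b * y)}

/-- The `B`-balanced tensor product `N ⊗_B T`. -/
abbrev Umod : Type := (N ⊗[K] TensorAlg K B N) ⧸ balRel K B N

/-- The image of `n ⊗ y` in `N ⊗_B T`. -/
def Umk (n : N) (y : TensorAlg K B N) : Umod K B N :=
  Submodule.Quotient.mk (n ⊗ₜ[K] y)

theorem Umod_ind {C : Umod K B N → Prop} (h0 : C 0)
    (hmk : ∀ n y, C (Umk K B N n y)) (hadd : ∀ u v, C u → C v → C (u + v)) :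
    ∀ u, C u := by
  intro u
  obtain ⟨w, rfl⟩ := Submodule.Quotient.mk_surjective _ u
  induction w using TensorProduct.induction_on with
  | zero => simpa using h0
  | tmul n y => exact hmk n y
  | add w1 w2 hw1 hw2 => rw [Submodule.Quotient.mk_add]; exact hadd _ _ hw1 hw2

theorem Umod_lext {Z : Type} [AddCommGroup Z] [Module K Z]
    {f g : Umod K B N →ₗ[K] Z} (h : ∀ n y, f (Umk K B N n y) = g (Umk K B N n y)) :
    f = g := by
  apply LinearMap.ext; intro u
  induction u using Umod_ind K B N with
  | h0 => rw [map_zero, map_zero]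
  | hmk n y => exact h n y
  | hadd u v hu hv => rw [map_add, map_add, hu, hv]

theorem Umk_add_left (n n' : N) (y : TensorAlg K B N) :
    Umk K B N (n + n') y = Umk K B N n y + Umk K B N n' y := by
  unfold Umk; rw [TensorProduct.add_tmul, Submodule.Quotient.mk_add]

theorem Umk_smul_left (c : K) (n : N) (y : TensorAlg K B N) :
    Umk K B N (c • n) y = c • Umk K B N n y := by
  unfold Umk; rw [← Submodule.Quotient.mk_smul, TensorProduct.smul_tmul']

theorem Umk_add_right (n : N) (y y' : TensorAlg K B N) :
    Umk K B N n (y + y') = Umk K B N n y + Umk K B N n y' := by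
  unfold Umk; rw [TensorProduct.tmul_add, Submodule.Quotient.mk_add]

theorem Umk_smul_right (c : K) (n : N) (y : TensorAlg K B N) :
    Umk K B N n (c • y) = c • Umk K B N n y := by
  unfold Umk; rw [TensorProduct.tmul_smul, Submodule.Quotient.mk_smul]

theorem Umk_bal (b : B) (n : N) (y : TensorAlg K B N) :
    Umk K B N (MulOpposite.op b • n) y = Umk K B N n (TensorAlg.ofB K B N b * y) := by
  unfold Umk
  rw [← sub_eq_zero, ← Submodule.Quotient.mk_sub, Submodule.Quotient.mk_eq_zero]
  exact Submodule.subset_span ⟨b, n, y, rfl⟩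

/-- The action of `b : B` on `N ⊗_B T`. -/
def bEnd (b : B) : Umod K B N →ₗ[K] Umod K B N :=
  Submodule.mapQ _ _ (LinearMap.rTensor (TensorAlg K B N) (bSmulLin K B N b)) (by
    rw [balRel, Submodule.span_le]
    rintro z ⟨b', n, y, rfl⟩
    simp only [SetLike.mem_coe, Submodule.mem_comap, map_sub, LinearMap.rTensor_tmul,
      bSmulLin, LinearMap.coe_mk, AddHom.coe_mk]
    rw [smul_comm b (MulOpposite.op b') n]
    exact Submodule.subset_span ⟨b', b • n, y, rfl⟩)

theorem bEnd_mk (b : B) (n : N) (y : TensorAlg K B N) :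
    bEnd K B N b (Umk K B N n y) = Umk K B N (b • n) y := by
  unfold bEnd Umk
  rw [Submodule.mapQ_apply, LinearMap.rTensor_tmul]
  rfl

/-- The ring morphism giving the left `B`-action on `N ⊗_B T`. -/
def bActHom : B →+* Module.End K (Umod K B N) where
  toFun := bEnd K B N
  map_one' := Umod_lext K B N (fun n y => by
    rw [bEnd_mk, one_smul]; rfl)
  map_mul' b b' := Umod_lext K B N (fun n y => by
    rw [bEnd_mk, Module.End.mul_apply, bEnd_mk, bEnd_mk, mul_smul])
  map_zero' := Umod_lext K B N (fun n y => by
    rw [bEnd_mk, zero_smul, LinearMap.zero_apply]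
    unfold Umk; rw [TensorProduct.zero_tmul]; rfl)
  map_add' b b' := Umod_lext K B N (fun n y => by
    rw [bEnd_mk, LinearMap.add_apply, bEnd_mk, bEnd_mk, add_smul, Umk_add_left])

instance UmodModB : Module B (Umod K B N) := Module.compHom _ (bActHom K B N)

theorem Umod_bsmul (b : B) (n : N) (y : TensorAlg K B N) :
    b • Umk K B N n y = Umk K B N (b • n) y :=
  bEnd_mk K B N b n y

/-- The action of `a : Tᵐᵒᵖ` on `N ⊗_B T`. -/
def tEnd (a : (TensorAlg K B N)ᵐᵒᵖ) : Umod K B N →ₗ[K] Umod K B N :=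
  Submodule.mapQ _ _ (LinearMap.lTensor N (LinearMap.mulRight K a.unop)) (by
    rw [balRel, Submodule.span_le]
    rintro z ⟨b', n, y, rfl⟩
    simp only [SetLike.mem_coe, Submodule.mem_comap, map_sub, LinearMap.lTensor_tmul,
      LinearMap.mulRight_apply]
    rw [mul_assoc]
    exact Submodule.subset_span ⟨b', n, y * MulOpposite.unop a, rfl⟩)

theorem tEnd_mk (a : (TensorAlg K B N)ᵐᵒᵖ) (n : N) (y : TensorAlg K B N) :
    tEnd K B N a (Umk K B N n y) = Umk K B N n (y * a.unop) := by
  unfold tEnd Umk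
  rw [Submodule.mapQ_apply, LinearMap.lTensor_tmul]
  rfl

set_option maxHeartbeats 1000000 in
/-- The ring morphism giving the right `T`-action on `N ⊗_B T`. -/
def tActHom : (TensorAlg K B N)ᵐᵒᵖ →+* Module.End K (Umod K B N) where
  toFun := tEnd K B N
  map_one' := Umod_lext K B N (fun n y => by
    rw [tEnd_mk, MulOpposite.unop_one, mul_one]; rfl)
  map_mul' a a' := Umod_lext K B N (fun n y => by
    rw [tEnd_mk, Module.End.mul_apply, tEnd_mk, tEnd_mk, MulOpposite.unop_mul, mul_assoc])
  map_zero' := Umod_lext K B N (fun n y => by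
    rw [tEnd_mk, MulOpposite.unop_zero, mul_zero, LinearMap.zero_apply]
    unfold Umk; rw [TensorProduct.tmul_zero]; rfl)
  map_add' a a' := Umod_lext K B N (fun n y => by
    rw [tEnd_mk, LinearMap.add_apply, tEnd_mk, tEnd_mk, MulOpposite.unop_add, mul_add,
      Umk_add_right])

instance UmodModTop : Module (TensorAlg K B N)ᵐᵒᵖ (Umod K B N) :=
  Module.compHom _ (tActHom K B N)

theorem Umod_opsmul (a : (TensorAlg K B N)ᵐᵒᵖ) (n : N) (y : TensorAlg K B N) :
    a • Umk K B N n y = Umk K B N n (y * a.unop) :=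
  tEnd_mk K B N a n y

end Aux4
end AuxProof4
section AuxProof5
variable {K : Type} [Field K] {B : Type} [Ring B] [Algebra K B]
variable {N : Type} [AddCommGroup N] [Module K N] [Module B N] [Module Bᵐᵒᵖ N]
  [SMulCommClass B Bᵐᵒᵖ N] [IsScalarTower K B N] [IsScalarTower K Bᵐᵒᵖ N]
variable {P3 : Type} [AddCommGroup P3] [Module K P3]
  [Module (TensorAlg K B N) P3] [Module (TensorAlg K B N)ᵐᵒᵖ P3]
  {σ3 : TensorAlg K B N → N → TensorAlg K B N → P3}

namespace Aux4

/-- `σ3 x` as a map out of `N ⊗_B T`. -/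
noncomputable def sigmaE (h3 : RealizesTNT K B N P3 σ3) (x : TensorAlg K B N) :
    Umod K B N →ₗ[K] P3 :=
  Submodule.liftQ _ (TensorProduct.lift (LinearMap.mk₂ K (fun n y => σ3 x n y)
    (fun n n' y => s3_add2 h3 x y n n') (fun c n y => s3_smul2 h3 c x y n)
    (fun n y y' => s3_add3 h3 x y y' n) (fun c n y => s3_smul3 h3 c x y n))) (by
      rw [balRel, Submodule.span_le]
      rintro z ⟨b, n, y, rfl⟩
      simp only [SetLike.mem_coe, LinearMap.mem_ker, map_sub, TensorProduct.lift.tmul,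
        LinearMap.mk₂_apply, sub_eq_zero]
      exact h3.2.2.2.2.1 x y b n)

theorem sigmaE_mk (h3 : RealizesTNT K B N P3 σ3) (x : TensorAlg K B N) (n : N)
    (y : TensorAlg K B N) : sigmaE h3 x (Umk K B N n y) = σ3 x n y := by
  unfold sigmaE Umk
  rw [Submodule.liftQ_apply, TensorProduct.lift.tmul, LinearMap.mk₂_apply]

theorem relproj3 (h3 : RealizesTNT K B N P3 σ3) : IsRelProjTBimod K B N P3 := by
  refine ⟨{ U := Umod K B N }, { X := P3 }, fun x u => sigmaE h3 x u,
    ⟨?_, ?_, ?_, ?_, ?_, ?_⟩,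
    LinearMap.id, LinearMap.id, fun _ _ => rfl, fun _ _ => rfl, fun _ _ => rfl,
    fun _ _ => rfl, fun _ => rfl⟩
  · -- left linearity in x
    intro c x x' u
    show sigmaE h3 (c • x + x') u = c • sigmaE h3 x u + sigmaE h3 x' u
    induction u using Umod_ind K B N with
    | h0 => simp only [map_zero]; rw [smul_zero, add_zero]
    | hmk n y => rw [sigmaE_mk, sigmaE_mk, sigmaE_mk]; exact h3.1 c x x' y n
    | hadd u v hu hv =>
        rw [map_add, map_add, map_add, hu, hv, smul_add]; abel
  · -- linearity in u
    intro c x u u'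
    show sigmaE h3 x (c • u + u') = c • sigmaE h3 x u + sigmaE h3 x u'
    rw [map_add, map_smul]
  · -- balancedness
    intro x b u
    show sigmaE h3 (x * TensorAlg.ofB K B N b) u = sigmaE h3 x (b • u)
    induction u using Umod_ind K B N with
    | h0 => rw [smul_zero, map_zero, map_zero]
    | hmk n y =>
        rw [show b • Umk K B N n y = Umk K B N (b • n) y from Umod_bsmul K B N b n y,
          sigmaE_mk, sigmaE_mk]
        exact h3.2.2.2.1 x y b n
    | hadd u v hu hv => rw [smul_add, map_add, map_add, hu, hv]
  · -- left `T`-action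
    intro a x u
    show a • sigmaE h3 x u = sigmaE h3 (a * x) u
    induction u using Umod_ind K B N with
    | h0 => rw [map_zero, map_zero, smul_zero]
    | hmk n y => rw [sigmaE_mk, sigmaE_mk]; exact h3.2.2.2.2.2.1 a x y n
    | hadd u v hu hv => rw [map_add, map_add, smul_add, hu, hv]
  · -- right `T`-action
    intro a x u
    show a • sigmaE h3 x u = sigmaE h3 x (a • u)
    induction u using Umod_ind K B N with
    | h0 => rw [smul_zero, map_zero, smul_zero]
    | hmk n y =>
        rw [show a • Umk K B N n y = Umk K B N n (y * a.unop) from Umod_opsmul K B N a n y,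
          sigmaE_mk, sigmaE_mk]
        exact h3.2.2.2.2.2.2.1 a x y n
    | hadd u v hu hv => rw [map_add, smul_add, smul_add, map_add, hu, hv]
  · -- universal property
    intro Z _ _ φ hφ1 hφ2 hφ3
    have hφadd : ∀ x u u', φ x (u + u') = φ x u + φ x u' := by
      intro x u u'; have := hφ2 1 x u u'; simpa using this
    have hφzero : ∀ x, φ x (0 : Umod K B N) = 0 := by
      intro x; have := hφadd x 0 0; simpa using this.symm
    have hφsmul : ∀ (c : K) x u, φ x (c • u) = c • φ x u := by
      intro c x u; have := hφ2 c x u 0; simpa [hφzero] using this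
    obtain ⟨ψ, hψ, huniq⟩ := h3.2.2.2.2.2.2.2 Z (fun x n y => φ x (Umk K B N n y))
      (fun c x x' y n => hφ1 c x x' (Umk K B N n y))
      (fun c x y n n' => by
        show φ x (Umk K B N (c • n + n') y)
          = c • φ x (Umk K B N n y) + φ x (Umk K B N n' y)
        rw [Umk_add_left, Umk_smul_left]; exact hφ2 c x _ _)
      (fun c x y y' n => by
        show φ x (Umk K B N n (c • y + y'))
          = c • φ x (Umk K B N n y) + φ x (Umk K B N n y')
        rw [Umk_add_right, Umk_smul_right]; exact hφ2 c x _ _)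
      (fun x y b n => by
        show φ (x * TensorAlg.ofB K B N b) (Umk K B N n y) = φ x (Umk K B N (b • n) y)
        rw [← Umod_bsmul K B N b n y]; exact hφ3 x b (Umk K B N n y))
      (fun x y b n => by
        show φ x (Umk K B N (MulOpposite.op b • n) y)
          = φ x (Umk K B N n (TensorAlg.ofB K B N b * y))
        rw [Umk_bal])
    refine ⟨ψ, ?_, ?_⟩
    · intro x u
      show ψ (sigmaE h3 x u) = φ x u
      induction u using Umod_ind K B N with
      | h0 => rw [map_zero, map_zero, hφzero]
      | hmk n y => rw [sigmaE_mk]; exact hψ x n y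
      | hadd u v hu hv => rw [map_add, map_add, hu, hv, hφadd]
    · intro ψ' hψ'
      refine huniq ψ' (fun x n y => ?_)
      have : ψ' (sigmaE h3 x (Umk K B N n y)) = φ x (Umk K B N n y) := hψ' x (Umk K B N n y)
      rwa [sigmaE_mk] at this
  
end Aux4
end AuxProof5
section AuxProof6
variable {K : Type} [Field K] {B : Type} [Ring B] [Algebra K B]
variable {N : Type} [AddCommGroup N] [Module K N] [Module B N] [Module Bᵐᵒᵖ N]
  [SMulCommClass B Bᵐᵒᵖ N] [IsScalarTower K B N] [IsScalarTower K Bᵐᵒᵖ N]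
variable {P2 : Type} [AddCommGroup P2] [Module K P2]
  [Module (TensorAlg K B N) P2] [Module (TensorAlg K B N)ᵐᵒᵖ P2]
  {σ2 : TensorAlg K B N → TensorAlg K B N → P2}
variable {P3 : Type} [AddCommGroup P3] [Module K P3]
  [Module (TensorAlg K B N) P3] [Module (TensorAlg K B N)ᵐᵒᵖ P3]
  {σ3 : TensorAlg K B N → N → TensorAlg K B N → P3}

namespace Aux4

theorem exists_fm (h2 : RealizesTT K B N P2 σ2) :
    ∃ fm : P2 →ₗ[K] TensorAlg K B N, ∀ x y, fm (σ2 x y) = x * y := by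
  obtain ⟨ψ, hψ, -⟩ := h2.2.2.2.2.2 (TensorAlg K B N) (fun x y => x * y)
    (fun c x x' y => by
      show (c • x + x') * y = c • (x * y) + x' * y
      rw [add_mul, smul_mul_assoc])
    (fun c x y y' => by
      show x * (c • y + y') = c • (x * y) + x * y'
      rw [mul_add, mul_smul_comm])
    (fun x y b => by
      show x * TensorAlg.ofB K B N b * y = x * (TensorAlg.ofB K B N b * y)
      rw [mul_assoc])
  exact ⟨ψ, hψ⟩

theorem exists_gm (h2 : RealizesTT K B N P2 σ2) (h3 : RealizesTNT K B N P3 σ3) :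
    ∃ gm : P3 →ₗ[K] P2, ∀ x n y, gm (σ3 x n y)
      = σ2 (x * TensorAlg.ofN K B N n) y - σ2 x (TensorAlg.ofN K B N n * y) := by
  obtain ⟨ψ, hψ, -⟩ := h3.2.2.2.2.2.2.2 P2
    (fun x n y => σ2 (x * TensorAlg.ofN K B N n) y - σ2 x (TensorAlg.ofN K B N n * y))
    (fun c x x' y n => by
      show σ2 ((c • x + x') * TensorAlg.ofN K B N n) y - σ2 (c • x + x') (TensorAlg.ofN K B N n * y)
        = c • (σ2 (x * TensorAlg.ofN K B N n) y - σ2 x (TensorAlg.ofN K B N n * y))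
          + (σ2 (x' * TensorAlg.ofN K B N n) y - σ2 x' (TensorAlg.ofN K B N n * y))
      rw [add_mul, smul_mul_assoc, h2.1, h2.1, smul_sub]; abel)
    (fun c x y n n' => by
      show σ2 (x * TensorAlg.ofN K B N (c • n + n')) y - σ2 x (TensorAlg.ofN K B N (c • n + n') * y)
        = c • (σ2 (x * TensorAlg.ofN K B N n) y - σ2 x (TensorAlg.ofN K B N n * y))
          + (σ2 (x * TensorAlg.ofN K B N n') y - σ2 x (TensorAlg.ofN K B N n' * y))
      rw [map_add, map_smul, mul_add, mul_smul_comm, s2_addl h2, s2_smull h2,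
        add_mul, smul_mul_assoc, s2_addr h2, s2_smulr h2, smul_sub]
      abel)
    (fun c x y y' n => by
      show σ2 (x * TensorAlg.ofN K B N n) (c • y + y') - σ2 x (TensorAlg.ofN K B N n * (c • y + y'))
        = c • (σ2 (x * TensorAlg.ofN K B N n) y - σ2 x (TensorAlg.ofN K B N n * y))
          + (σ2 (x * TensorAlg.ofN K B N n) y' - σ2 x (TensorAlg.ofN K B N n * y'))
      rw [mul_add, mul_smul_comm, s2_addr h2, s2_smulr h2, s2_addr h2, s2_smulr h2, smul_sub]
      abel)
    (fun x y b n => by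
      show σ2 (x * TensorAlg.ofB K B N b * TensorAlg.ofN K B N n) y
          - σ2 (x * TensorAlg.ofB K B N b) (TensorAlg.ofN K B N n * y)
        = σ2 (x * TensorAlg.ofN K B N (b • n)) y - σ2 x (TensorAlg.ofN K B N (b • n) * y)
      rw [mul_assoc, TensorAlg.ofB_mul_ofN, h2.2.2.1, ← mul_assoc, TensorAlg.ofB_mul_ofN])
    (fun x y b n => by
      show σ2 (x * TensorAlg.ofN K B N (MulOpposite.op b • n)) y
          - σ2 x (TensorAlg.ofN K B N (MulOpposite.op b • n) * y)
        = σ2 (x * TensorAlg.ofN K B N n) (TensorAlg.ofB K B N b * y)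
          - σ2 x (TensorAlg.ofN K B N n * (TensorAlg.ofB K B N b * y))
      rw [← TensorAlg.ofN_mul_ofB, ← mul_assoc, h2.2.2.1, mul_assoc])
  exact ⟨ψ, hψ⟩

theorem gm_smul (h2 : RealizesTT K B N P2 σ2) (h3 : RealizesTNT K B N P3 σ3)
    (gm : P3 →ₗ[K] P2)
    (hgm : ∀ x n y, gm (σ3 x n y)
      = σ2 (x * TensorAlg.ofN K B N n) y - σ2 x (TensorAlg.ofN K B N n * y))
    (a : TensorAlg K B N) (z : P3) : gm (a • z) = a • gm z := by
  have h := ext3 h3 (gm ∘ₗ lsmul3 h3 a) (lsmul2 h2 a ∘ₗ gm) (fun x n y => by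
    show gm (a • σ3 x n y) = a • gm (σ3 x n y)
    rw [h3.2.2.2.2.2.1, hgm, hgm, smul_sub, h2.2.2.2.1, h2.2.2.2.1, mul_assoc])
  exact DFunLike.congr_fun h z

theorem gm_opsmul (h2 : RealizesTT K B N P2 σ2) (h3 : RealizesTNT K B N P3 σ3)
    (gm : P3 →ₗ[K] P2)
    (hgm : ∀ x n y, gm (σ3 x n y)
      = σ2 (x * TensorAlg.ofN K B N n) y - σ2 x (TensorAlg.ofN K B N n * y))
    (a : (TensorAlg K B N)ᵐᵒᵖ) (z : P3) : gm (a • z) = a • gm z := by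
  have h := ext3 h3 (gm ∘ₗ lsmul3op h3 a) (lsmul2op h2 a ∘ₗ gm) (fun x n y => by
    show gm (a • σ3 x n y) = a • gm (σ3 x n y)
    rw [h3.2.2.2.2.2.2.1, hgm, hgm, smul_sub, h2.2.2.2.2.1, h2.2.2.2.2.1, mul_assoc])
  exact DFunLike.congr_fun h z

/-- the section `s : T → T ⊗_B T`, `x ↦ 1 ⊗ x`. -/
def sLin (h2 : RealizesTT K B N P2 σ2) : TensorAlg K B N →ₗ[K] P2 where
  toFun x := σ2 1 x
  map_add' x y := s2_addr h2 1 x y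
  map_smul' c x := s2_smulr h2 c 1 x

end Aux4
end AuxProof6
section AuxProof7
variable {K : Type} [Field K] {B : Type} [Ring B] [Algebra K B]
variable {N : Type} [AddCommGroup N] [Module K N] [Module B N] [Module Bᵐᵒᵖ N]
  [SMulCommClass B Bᵐᵒᵖ N] [IsScalarTower K B N] [IsScalarTower K Bᵐᵒᵖ N]
variable {P2 : Type} [AddCommGroup P2] [Module K P2]
  [Module (TensorAlg K B N) P2] [Module (TensorAlg K B N)ᵐᵒᵖ P2]
  {σ2 : TensorAlg K B N → TensorAlg K B N → P2}
variable {P3 : Type} [AddCommGroup P3] [Module K P3]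
  [Module (TensorAlg K B N) P3] [Module (TensorAlg K B N)ᵐᵒᵖ P3]
  {σ3 : TensorAlg K B N → N → TensorAlg K B N → P3}

namespace Aux4

set_option maxHeartbeats 2000000 in
theorem exists_r (h2 : RealizesTT K B N P2 σ2) (h3 : RealizesTNT K B N P3 σ3)
    (gm : P3 →ₗ[K] P2)
    (hgm : ∀ x n y, gm (σ3 x n y)
      = σ2 (x * TensorAlg.ofN K B N n) y - σ2 x (TensorAlg.ofN K B N n * y)) :
    ∃ r : P2 →ₗ[K] P3,
      (∀ (b : B) (z : P2),
        r (TensorAlg.ofB K B N b • z) = TensorAlg.ofB K B N b • r z) ∧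
      (∀ (a : (TensorAlg K B N)ᵐᵒᵖ) (z : P2), r (a • z) = a • r z) ∧
      (∀ z : P3, r (gm z) = z) ∧
      (∀ x y, gm (r (σ2 x y)) = σ2 x y - σ2 1 (x * y)) := by
  -- the bimodule `M = Hom_K(T, P3)`
  letI instMT : Module (TensorAlg K B N) (TensorAlg K B N →ₗ[K] P3) :=
    { smul := fun t h =>
        { toFun := fun y => t • h y
          map_add' := fun y y' => by
            show t • h (y + y') = t • h y + t • h y'
            rw [map_add, smul_add]
          map_smul' := fun c y => by
            show t • h (c • y) = c • (t • h y)
            rw [map_smul]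
            exact P3_smul_comm h3 t c (h y) }
      one_smul := fun h => LinearMap.ext fun y => one_smul _ (h y)
      mul_smul := fun t t' h => LinearMap.ext fun y => mul_smul t t' (h y)
      smul_zero := fun t => LinearMap.ext fun y => smul_zero t
      smul_add := fun t h h' => LinearMap.ext fun y => smul_add t (h y) (h' y)
      add_smul := fun t t' h => LinearMap.ext fun y => add_smul t t' (h y)
      zero_smul := fun h => LinearMap.ext fun y => zero_smul _ (h y) }
  letI instMTop : Module (TensorAlg K B N)ᵐᵒᵖ (TensorAlg K B N →ₗ[K] P3) :=
    { smul := fun a h => h ∘ₗ LinearMap.mulLeft K a.unop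
      one_smul := fun h => LinearMap.ext fun y => by
        show h (MulOpposite.unop 1 * y) = h y
        rw [MulOpposite.unop_one, one_mul]
      mul_smul := fun a a' h => LinearMap.ext fun y => by
        show h (MulOpposite.unop (a * a') * y) = h (MulOpposite.unop a' * (MulOpposite.unop a * y))
        rw [MulOpposite.unop_mul, mul_assoc]
      smul_zero := fun a => LinearMap.ext fun y => rfl
      smul_add := fun a h h' => LinearMap.ext fun y => rfl
      add_smul := fun a a' h => LinearMap.ext fun y => by
        show h (MulOpposite.unop (a + a') * y)
          = h (MulOpposite.unop a * y) + h (MulOpposite.unop a' * y)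
        rw [MulOpposite.unop_add, add_mul, map_add]
      zero_smul := fun h => LinearMap.ext fun y => by
        show h (MulOpposite.unop 0 * y) = 0
        rw [MulOpposite.unop_zero, zero_mul, map_zero] }
  letI : SMulCommClass (TensorAlg K B N) (TensorAlg K B N)ᵐᵒᵖ
      (TensorAlg K B N →ₗ[K] P3) := ⟨fun t a h => LinearMap.ext fun y => rfl⟩
  letI : IsScalarTower K (TensorAlg K B N) (TensorAlg K B N →ₗ[K] P3) :=
    ⟨fun c t h => LinearMap.ext fun y => P3_ksmul_assoc h3 c t (h y)⟩
  letI : IsScalarTower K (TensorAlg K B N)ᵐᵒᵖ (TensorAlg K B N →ₗ[K] P3) :=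
    ⟨fun c a h => LinearMap.ext fun y => by
      show h (MulOpposite.unop (c • a) * y) = c • h (MulOpposite.unop a * y)
      rw [MulOpposite.unop_smul, smul_mul_assoc, map_smul]⟩
  -- the derivation data
  set Dn : N → (TensorAlg K B N →ₗ[K] P3) := fun n =>
    { toFun := fun y => σ3 1 n y
      map_add' := fun y y' => s3_add3 h3 1 y y' n
      map_smul' := fun c y => s3_smul3 h3 c 1 y n } with hDn
  have Dadd : ∀ n n', Dn (n + n') = Dn n + Dn n' := fun n n' =>
    LinearMap.ext fun y => s3_add2 h3 1 y n n'
  have Dsmul : ∀ (c : K) n, Dn (c • n) = c • Dn n := fun c n =>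
    LinearMap.ext fun y => s3_smul2 h3 c 1 y n
  have hD1 : ∀ (b : B) n, (TensorAlg.ofB K B N b) • Dn n = Dn (b • n) := fun b n => by
    apply LinearMap.ext; intro y
    show TensorAlg.ofB K B N b • σ3 1 n y = σ3 1 (b • n) y
    rw [h3.2.2.2.2.2.1, mul_one]
    have := h3.2.2.2.1 1 y b n
    rwa [one_mul] at this
  have hD2 : ∀ (b : B) n,
      (MulOpposite.op (TensorAlg.ofB K B N b)) • Dn n = Dn (MulOpposite.op b • n) := by
    intro b n
    apply LinearMap.ext; intro y
    show σ3 1 n (TensorAlg.ofB K B N b * y) = σ3 1 (MulOpposite.op b • n) y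
    rw [h3.2.2.2.2.1]
  -- the algebra morphism `Φ : T → T ⋉ M`
  set F : FreeAlgebra K (B ⊕ N) →ₐ[K]
      TrivSqZeroExt (TensorAlg K B N) (TensorAlg K B N →ₗ[K] P3) :=
    FreeAlgebra.lift K (Sum.elim
      (fun b => TrivSqZeroExt.inl (TensorAlg.ofB K B N b))
      (fun n => TrivSqZeroExt.inl (TensorAlg.ofN K B N n) + TrivSqZeroExt.inr (Dn n)))
    with hF
  have FB : ∀ b, F (FreeAlgebra.ι K (Sum.inl b))
      = TrivSqZeroExt.inl (TensorAlg.ofB K B N b) := fun b => by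
    rw [hF, FreeAlgebra.lift_ι_apply]
    rfl
  have FN : ∀ n, F (FreeAlgebra.ι K (Sum.inr n))
      = TrivSqZeroExt.inl (TensorAlg.ofN K B N n) + TrivSqZeroExt.inr (Dn n) := fun n => by
    rw [hF, FreeAlgebra.lift_ι_apply]
    rfl
  have hrel : ∀ ⦃x y⦄, TensRel K B N x y → F x = F y := by
    intro x y h
    induction h with
    | b_add b b' => rw [map_add, FB, FB, FB, map_add, TrivSqZeroExt.inl_add]
    | b_smul c b => rw [map_smul, FB, FB, map_smul, TrivSqZeroExt.inl_smul]
    | b_mul b b' => rw [map_mul, FB, FB, FB, map_mul, TrivSqZeroExt.inl_mul_inl]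
    | b_one => rw [map_one, FB, map_one, TrivSqZeroExt.inl_one]
    | n_add n n' => rw [map_add, FN, FN, FN, map_add, TrivSqZeroExt.inl_add, Dadd,
        TrivSqZeroExt.inr_add]; abel
    | n_smul c n => rw [map_smul, FN, FN, map_smul, TrivSqZeroExt.inl_smul, Dsmul,
        TrivSqZeroExt.inr_smul, smul_add]
    | act_left b n => rw [map_mul, FB, FN, FN, mul_add, TrivSqZeroExt.inl_mul_inl,
        TrivSqZeroExt.inl_mul_inr, TensorAlg.ofB_mul_ofN, hD1]
    | act_right b n => rw [map_mul, FN, FB, FN, add_mul, TrivSqZeroExt.inl_mul_inl,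
        TrivSqZeroExt.inr_mul_inl, TensorAlg.ofN_mul_ofB, hD2]
  set Φ : TensorAlg K B N →ₐ[K]
      TrivSqZeroExt (TensorAlg K B N) (TensorAlg K B N →ₗ[K] P3) :=
    RingQuot.liftAlgHom K ⟨F, hrel⟩ with hΦ
  have hΦmk : ∀ z, Φ (RingQuot.mkAlgHom K (TensRel K B N) z) = F z := fun z => by
    rw [hΦ]; exact RingQuot.liftAlgHom_mkAlgHom_apply K F hrel z
  have hΦB : ∀ b, Φ (TensorAlg.ofB K B N b)
      = TrivSqZeroExt.inl (TensorAlg.ofB K B N b) := fun b => by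
    have h1 : TensorAlg.ofB K B N b
        = RingQuot.mkAlgHom K (TensRel K B N) (FreeAlgebra.ι K (Sum.inl b)) := rfl
    rw [h1, hΦmk, FB]
    rfl
  have hΦN : ∀ n, Φ (TensorAlg.ofN K B N n)
      = TrivSqZeroExt.inl (TensorAlg.ofN K B N n) + TrivSqZeroExt.inr (Dn n) := fun n => by
    have h1 : TensorAlg.ofN K B N n
        = RingQuot.mkAlgHom K (TensRel K B N) (FreeAlgebra.ι K (Sum.inr n)) := rfl
    rw [h1, hΦmk, FN]
    rfl
  have hΦfst : ∀ x, (Φ x).fst = x := by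
    have heq : (TrivSqZeroExt.fstHom K (TensorAlg K B N)
          (TensorAlg K B N →ₗ[K] P3)).comp Φ = AlgHom.id K (TensorAlg K B N) := by
      apply RingQuot.ringQuot_ext'
      apply FreeAlgebra.hom_ext
      funext z
      cases z with
      | inl b =>
          show ((TrivSqZeroExt.fstHom K _ _).comp Φ)
            (RingQuot.mkAlgHom K (TensRel K B N) (FreeAlgebra.ι K (Sum.inl b))) = _
          rw [AlgHom.comp_apply, hΦmk, FB]
          simp [TrivSqZeroExt.fst_inl]
          rfl
      | inr n =>
          show ((TrivSqZeroExt.fstHom K _ _).comp Φ)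
            (RingQuot.mkAlgHom K (TensRel K B N) (FreeAlgebra.ι K (Sum.inr n))) = _
          rw [AlgHom.comp_apply, hΦmk, FN]
          simp [TrivSqZeroExt.fst_add, TrivSqZeroExt.fst_inl, TrivSqZeroExt.fst_inr]
          rfl
    intro x
    exact DFunLike.congr_fun heq x
  -- key computations by induction over the algebra
  have sndmul : ∀ x x' y, (Φ (x * x')).snd y
      = x • (Φ x').snd y + (Φ x).snd (x' * y) := by
    intro x x' y
    rw [map_mul, TrivSqZeroExt.snd_mul, hΦfst, hΦfst]
    rfl
  have sndadd : ∀ x x' y, (Φ (x + x')).snd y = (Φ x).snd y + (Φ x').snd y := by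
    intro x x' y
    rw [map_add, TrivSqZeroExt.snd_add]
    rfl
  have sndsmul : ∀ (c : K) x y, (Φ (c • x)).snd y = c • (Φ x).snd y := by
    intro c x y
    rw [map_smul, TrivSqZeroExt.snd_smul]
    rfl
  have sndalg : ∀ (c : K) y, (Φ (algebraMap K (TensorAlg K B N) c)).snd y = 0 := by
    intro c y
    rw [AlgHom.commutes, TrivSqZeroExt.algebraMap_eq_inl', TrivSqZeroExt.snd_inl]
    rfl
  have sndB : ∀ (b : B) y, (Φ (TensorAlg.ofB K B N b)).snd y = 0 := by
    intro b y
    rw [hΦB, TrivSqZeroExt.snd_inl]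
    rfl
  have sndN : ∀ n y, (Φ (TensorAlg.ofN K B N n)).snd y = σ3 1 n y := by
    intro n y
    rw [hΦN, TrivSqZeroExt.snd_add, TrivSqZeroExt.snd_inl, TrivSqZeroExt.snd_inr]
    show ((0 : TensorAlg K B N →ₗ[K] P3) + Dn n) y = σ3 1 n y
    rw [zero_add]; rfl
  have key : ∀ (x : TensorAlg K B N) (y : TensorAlg K B N),
      gm ((Φ x).snd y) = σ2 x y - σ2 1 (x * y) := by
    intro x
    obtain ⟨z, rfl⟩ := RingQuot.mkAlgHom_surjective K (TensRel K B N) x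
    induction z using FreeAlgebra.induction with
    | grade0 c =>
        intro y
        rw [AlgHom.commutes, sndalg, map_zero, Algebra.algebraMap_eq_smul_one,
          s2_smull h2, smul_mul_assoc, one_mul, s2_smulr h2, sub_self]
    | grade1 z =>
        cases z with
        | inl b =>
            intro y
            rw [show RingQuot.mkAlgHom K (TensRel K B N) (FreeAlgebra.ι K (Sum.inl b))
              = TensorAlg.ofB K B N b from rfl, sndB, map_zero]
            have := h2.2.2.1 1 y b
            rw [one_mul] at this
            rw [this, sub_self]
        | inr n =>
            intro y
            rw [show RingQuot.mkAlgHom K (TensRel K B N) (FreeAlgebra.ι K (Sum.inr n))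
              = TensorAlg.ofN K B N n from rfl, sndN, hgm, one_mul]
    | mul z1 z2 ih1 ih2 =>
        intro y
        rw [map_mul, sndmul, map_add, gm_smul h2 h3 gm hgm, ih2 y, smul_sub,
          h2.2.2.2.1, h2.2.2.2.1, mul_one, ih1 (RingQuot.mkAlgHom K (TensRel K B N) z2 * y),
          mul_assoc]
        abel
    | add z1 z2 ih1 ih2 =>
        intro y
        rw [map_add, sndadd, map_add, ih1 y, ih2 y, s2_addl h2, add_mul, s2_addr h2]
        abel
  have key2 : ∀ (x : TensorAlg K B N) (a : (TensorAlg K B N)ᵐᵒᵖ) (y : TensorAlg K B N),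
      a • (Φ x).snd y = (Φ x).snd (y * a.unop) := by
    intro x
    obtain ⟨z, rfl⟩ := RingQuot.mkAlgHom_surjective K (TensRel K B N) x
    induction z using FreeAlgebra.induction with
    | grade0 c => intro a y; rw [AlgHom.commutes, sndalg, sndalg, smul_zero]
    | grade1 z =>
        cases z with
        | inl b =>
            intro a y
            rw [show RingQuot.mkAlgHom K (TensRel K B N) (FreeAlgebra.ι K (Sum.inl b))
              = TensorAlg.ofB K B N b from rfl, sndB, sndB, smul_zero]
        | inr n =>
            intro a y
            rw [show RingQuot.mkAlgHom K (TensRel K B N) (FreeAlgebra.ι K (Sum.inr n))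
              = TensorAlg.ofN K B N n from rfl, sndN, sndN]
            exact h3.2.2.2.2.2.2.1 a 1 y n
    | mul z1 z2 ih1 ih2 =>
        intro a y
        rw [map_mul, sndmul, sndmul, smul_add, P3_op_comm h3, ih2 a y,
          ih1 a (RingQuot.mkAlgHom K (TensRel K B N) z2 * y), mul_assoc]
    | add z1 z2 ih1 ih2 =>
        intro a y
        rw [map_add, sndadd, sndadd, smul_add, ih1 a y, ih2 a y]
  -- define `r` by the universal property of `T ⊗_B T`
  obtain ⟨r, hr, -⟩ := h2.2.2.2.2.2 P3 (fun x y => (Φ x).snd y)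
    (fun c x x' y => by
      show (Φ (c • x + x')).snd y = c • (Φ x).snd y + (Φ x').snd y
      rw [sndadd, sndsmul])
    (fun c x y y' => by
      show (Φ x).snd (c • y + y') = c • (Φ x).snd y + (Φ x).snd y'
      rw [map_add, map_smul])
    (fun x y b => by
      show (Φ (x * TensorAlg.ofB K B N b)).snd y = (Φ x).snd (TensorAlg.ofB K B N b * y)
      rw [sndmul, sndB, smul_zero, zero_add])
  refine ⟨r, ?_, ?_, ?_, fun x y => by rw [hr]; exact key x y⟩
  · -- left B-linearity
    intro b z
    have h := ext2 h2 (r ∘ₗ lsmul2 h2 (TensorAlg.ofB K B N b))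
      (lsmul3 h3 (TensorAlg.ofB K B N b) ∘ₗ r) (fun x y => by
        show r (TensorAlg.ofB K B N b • σ2 x y) = TensorAlg.ofB K B N b • r (σ2 x y)
        rw [h2.2.2.2.1, hr, hr, sndmul, sndB, add_zero])
    exact DFunLike.congr_fun h z
  · -- right T-linearity
    intro a z
    have h := ext2 h2 (r ∘ₗ lsmul2op h2 a) (lsmul3op h3 a ∘ₗ r) (fun x y => by
      show r (a • σ2 x y) = a • r (σ2 x y)
      rw [h2.2.2.2.2.1, hr, hr, key2])
    exact DFunLike.congr_fun h z
  · -- r ∘ gm = id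
    intro z
    have h := ext3 h3 (r ∘ₗ gm) LinearMap.id (fun x n y => by
      show r (gm (σ3 x n y)) = σ3 x n y
      rw [hgm, map_sub, hr, hr, sndmul, sndN]
      have e1 : x • σ3 1 n y = σ3 x n y := by
        rw [h3.2.2.2.2.2.1, mul_one]
      rw [e1, add_sub_cancel_right])
    exact DFunLike.congr_fun h z

end Aux4
end AuxProof7
theorem tensor_algebra_relative_projective_resolution
    (K : Type) [Field K] (B : Type) [Ring B] [Algebra K B]
    (N : Type) [AddCommGroup N] [Module K N] [Module B N] [Module Bᵐᵒᵖ N]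
    [SMulCommClass B Bᵐᵒᵖ N] [IsScalarTower K B N] [IsScalarTower K Bᵐᵒᵖ N]
    (P2 : Type) [AddCommGroup P2] [Module K P2]
    [Module (TensorAlg K B N) P2] [Module (TensorAlg K B N)ᵐᵒᵖ P2]
    (σ2 : TensorAlg K B N → TensorAlg K B N → P2)
    (h2 : RealizesTT K B N P2 σ2)
    (P3 : Type) [AddCommGroup P3] [Module K P3]
    [Module (TensorAlg K B N) P3] [Module (TensorAlg K B N)ᵐᵒᵖ P3]
    (σ3 : TensorAlg K B N → N → TensorAlg K B N → P3)
    (h3 : RealizesTNT K B N P3 σ3) :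
    -- `T ⊗_B T` and `T ⊗_B N ⊗_B T` are relatively projective `T`-bimodules:
    IsRelProjTBimod K B N P2 ∧ IsRelProjTBimod K B N P3 ∧
    -- the maps `f`, `g` of the sequence and the contracting homotopy `s`, `r`:
    ∃ (fm : P2 →ₗ[K] TensorAlg K B N) (gm : P3 →ₗ[K] P2)
      (s : TensorAlg K B N →ₗ[K] P2) (r : P2 →ₗ[K] P3),
      -- `f` is the multiplication of `T`:
      (∀ x y, fm (σ2 x y) = x * y) ∧
      -- `g(x ⊗ n ⊗ y) = xn ⊗ y − x ⊗ ny`: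
      (∀ x n y, gm (σ3 x n y)
        = σ2 (x * TensorAlg.ofN K B N n) y - σ2 x (TensorAlg.ofN K B N n * y)) ∧
      -- `f` and `g` are `T`-bimodule maps:
      (∀ (a : TensorAlg K B N) (z : P2), fm (a • z) = a * fm z) ∧
      (∀ (a : (TensorAlg K B N)ᵐᵒᵖ) (z : P2), fm (a • z) = fm z * a.unop) ∧
      (∀ (a : TensorAlg K B N) (z : P3), gm (a • z) = a • gm z) ∧
      (∀ (a : (TensorAlg K B N)ᵐᵒᵖ) (z : P3), gm (a • z) = a • gm z) ∧
      -- `f ∘ g = 0`: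
      (∀ z : P3, fm (gm z) = 0) ∧
      -- `s` and `r` are `B−T`-bimodule maps:
      (∀ (b : B) (x : TensorAlg K B N),
        s (TensorAlg.ofB K B N b * x) = TensorAlg.ofB K B N b • s x) ∧
      (∀ (a : (TensorAlg K B N)ᵐᵒᵖ) (x : TensorAlg K B N),
        s (x * a.unop) = a • s x) ∧
      (∀ (b : B) (z : P2), r (TensorAlg.ofB K B N b • z) = TensorAlg.ofB K B N b • r z) ∧
      (∀ (a : (TensorAlg K B N)ᵐᵒᵖ) (z : P2), r (a • z) = a • r z) ∧
      -- `f s = 1`, `r g = 1`, `g r + s f = 1`: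
      (∀ x : TensorAlg K B N, fm (s x) = x) ∧
      (∀ z : P3, r (gm z) = z) ∧
      (∀ z : P2, gm (r z) + s (fm z) = z) := by

  obtain ⟨fm, hfm⟩ := Aux4.exists_fm h2
  obtain ⟨gm, hgm⟩ := Aux4.exists_gm h2 h3
  obtain ⟨r, hrB, hrOp, hrg, hgr⟩ := Aux4.exists_r h2 h3 gm hgm
  refine ⟨Aux4.relproj2 h2, Aux4.relproj3 h3, fm, gm, Aux4.sLin h2, r,
    hfm, hgm, ?_, ?_, Aux4.gm_smul h2 h3 gm hgm, Aux4.gm_opsmul h2 h3 gm hgm,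
    ?_, ?_, ?_, hrB, hrOp, ?_, hrg, ?_⟩
  · -- fm is left T-linear
    intro a z
    have h := Aux4.ext2 h2 (fm ∘ₗ Aux4.lsmul2 h2 a)
      (LinearMap.mulLeft K a ∘ₗ fm) (fun x y => by
        show fm (a • σ2 x y) = a * fm (σ2 x y)
        rw [h2.2.2.2.1, hfm, hfm, mul_assoc])
    exact DFunLike.congr_fun h z
  · -- fm is right T-linear
    intro a z
    have h := Aux4.ext2 h2 (fm ∘ₗ Aux4.lsmul2op h2 a)
      (LinearMap.mulRight K a.unop ∘ₗ fm) (fun x y => by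
        show fm (a • σ2 x y) = fm (σ2 x y) * a.unop
        rw [h2.2.2.2.2.1, hfm, hfm, mul_assoc])
    exact DFunLike.congr_fun h z
  · -- fm ∘ gm = 0
    intro z
    have h := Aux4.ext3 h3 (fm ∘ₗ gm) 0 (fun x n y => by
      show fm (gm (σ3 x n y)) = (0 : P3 →ₗ[K] TensorAlg K B N) (σ3 x n y)
      rw [hgm, map_sub, hfm, hfm, mul_assoc, sub_self, LinearMap.zero_apply])
    exact DFunLike.congr_fun h z
  · -- s is left B-linear
    intro b x
    show σ2 1 (TensorAlg.ofB K B N b * x) = TensorAlg.ofB K B N b • σ2 1 x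
    rw [h2.2.2.2.1, mul_one]
    have h := h2.2.2.1 1 x b
    rw [one_mul] at h
    exact h.symm
  · -- s is right T-linear
    intro a x
    show σ2 1 (x * a.unop) = a • σ2 1 x
    exact (h2.2.2.2.2.1 a 1 x).symm
  · -- fm ∘ s = id
    intro x
    show fm (σ2 1 x) = x
    rw [hfm, one_mul]
  · -- gm ∘ r + s ∘ fm = id
    intro z
    have h := Aux4.ext2 h2 (gm ∘ₗ r + Aux4.sLin h2 ∘ₗ fm) LinearMap.id (fun x y => by
      show gm (r (σ2 x y)) + σ2 1 (fm (σ2 x y)) = σ2 x y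
      rw [hgr, hfm]
      abel)
    exact DFunLike.congr_fun h z
end
end

section
/- Let Q be a finite quiver, R ⊆ ⟨Q₂⟩ a set of linear combinations of paths of length at least 2, B = kQ/⟨R⟩_Q, and let e, f ∈ Q₀. Let N = Bf ⊗ eB be the projective B-bimodule corresponding to the idempotent f ⊗ e of B ⊗ B^{op}. Then the algebra B⁺ = kQ⁺/⟨R⟩_{Q⁺} obtained by adding one new arrow a from e to f is isomorphic as a k-algebra to the tensor algebra T_B(N). -/
/-!
STATEMENT 6: Let Q be a finite quiver, R ⊆ ⟨Q₂⟩ a set of linear combinations of paths of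
length at least 2, B = kQ/⟨R⟩_Q, and let e, f ∈ Q₀. Let N = Bf ⊗ eB be the projective
B-bimodule corresponding to the idempotent f ⊗ e of B ⊗ B^op. Then the algebra
B⁺ = kQ⁺/⟨R⟩_{Q⁺} obtained by adding one new arrow a from e to f is isomorphic as a k-algebra
to the tensor algebra T_B(N).
-/

set_option linter.unusedSectionVars false

open scoped TensorProduct
noncomputable section

variable (K : Type) [Field K]

/-- A finite quiver: a finite set of vertices, a finite set of arrows,
and source and target maps. -/
structure QuiverData : Type 1 where
  V : Type
  E : Type
  [fV : Fintype V]
  [fE : Fintype E]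
  [dV : DecidableEq V]
  [dE : DecidableEq E]
  s : E → V
  t : E → V

attribute [instance] QuiverData.fV QuiverData.fE QuiverData.dV QuiverData.dE



/-- The free algebra on the vertices and arrows of a quiver. -/
abbrev FA (Q : QuiverData) : Type := FreeAlgebra K (Q.V ⊕ Q.E)

/-- The generator corresponding to a vertex. -/
def QuiverData.vtx (Q : QuiverData) (i : Q.V) : FA K Q := FreeAlgebra.ι K (Sum.inl i)
/-- The generator corresponding to an arrow. -/
def QuiverData.arr (Q : QuiverData) (a : Q.E) : FA K Q := FreeAlgebra.ι K (Sum.inr a)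

/-- The relations presenting the quotient `kQ/⟨R⟩` of the path algebra `kQ` of the quiver `Q`
by the two-sided ideal generated by a set `R`: vertices are orthogonal idempotents summing
to `1`, and arrows are composable with their source and target vertices; the elements of `R`
are set to zero.  (`kQ` itself is the case `R = ∅`.) -/
inductive PathRel (Q : QuiverData) (R : Set (FA K Q)) : FA K Q → FA K Q → Prop
  | vtx_mul (i j : Q.V) : PathRel Q R (Q.vtx K i * Q.vtx K j) (if i = j then Q.vtx K i else 0)
  | vtx_sum : PathRel Q R (∑ i : Q.V, Q.vtx K i) 1
  | arr_t (a : Q.E) : PathRel Q R (Q.vtx K (Q.t a) * Q.arr K a) (Q.arr K a)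
  | arr_s (a : Q.E) : PathRel Q R (Q.arr K a * Q.vtx K (Q.s a)) (Q.arr K a)
  | rel (r : FA K Q) (hr : r ∈ R) : PathRel Q R r 0

/-- The algebra `kQ/⟨R⟩_Q`. -/
abbrev BQA (Q : QuiverData) (R : Set (FA K Q)) : Type := RingQuot (PathRel K Q R)

/-- The canonical projection onto `kQ/⟨R⟩_Q`. -/
def BQA.mk (Q : QuiverData) (R : Set (FA K Q)) : FA K Q →ₐ[K] BQA K Q R :=
  RingQuot.mkAlgHom K _

/-- The idempotent of `kQ/⟨R⟩_Q` given by a vertex. -/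
def vtxIdem (Q : QuiverData) (R : Set (FA K Q)) (i : Q.V) : BQA K Q R :=
  BQA.mk K Q R (Q.vtx K i)

/-- A sequence of arrows is composable if the source of each arrow is the target of
the previous one.  (`c i` is the `i`-th arrow traversed.) -/
def Composable (Q : QuiverData) {n : ℕ} (c : Fin n → Q.E) : Prop :=
  ∀ (i : ℕ) (h : i + 1 < n), Q.s (c ⟨i+1, h⟩) = Q.t (c ⟨i, Nat.lt_of_succ_lt h⟩)

/-- The element of the free algebra given by a path `aₙ ⋯ a₁`: the ordered product
of its arrows. -/
def chainWord (Q : QuiverData) {n : ℕ} (c : Fin n → Q.E) : FA K Q :=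
  ((List.ofFn c).reverse.map (Q.arr K)).prod

/-- The set of paths of length at least `2`, inside the free algebra. -/
def lenTwoWords (Q : QuiverData) : Set (FA K Q) :=
  {w | ∃ (n : ℕ), 2 ≤ n ∧ ∃ c : Fin n → Q.E, Composable Q c ∧ w = chainWord K Q c}

/-- `R ⊆ ⟨Q₂⟩`: the elements of `R` are linear combinations of paths of length at least 2. -/
def RelationsOK (Q : QuiverData) (R : Set (FA K Q)) : Prop :=
  R ⊆ (Submodule.span K (lenTwoWords K Q) : Submodule K (FA K Q))

/-- The ideal `⟨R⟩_Q` is admissible: all long enough paths vanish in `kQ/⟨R⟩_Q`, i.e.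
`⟨Qₙ⟩ ⊆ ⟨R⟩_Q` for some `n`. -/
def Admissible (Q : QuiverData) (R : Set (FA K Q)) : Prop :=
  ∃ m : ℕ, ∀ n, m ≤ n → ∀ c : Fin n → Q.E, Composable Q c → BQA.mk K Q R (chainWord K Q c) = 0

/-- `Q` together with `R` presents a bound quiver algebra. -/
def BoundQuiverAlgebra (Q : QuiverData) (R : Set (FA K Q)) : Prop :=
  R.Finite ∧ RelationsOK K Q R ∧ Admissible K Q R

/-- The quiver `Q⁺`, obtained from `Q` by adding one new arrow from `e` to `f`. -/
def QuiverData.plus (Q : QuiverData) (e f : Q.V) : QuiverData where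
  V := Q.V
  E := Q.E ⊕ Unit
  s := Sum.elim Q.s (fun _ => e)
  t := Sum.elim Q.t (fun _ => f)

/-- The inclusion of the free algebra of `Q` into that of `Q⁺`. -/
def inclFA (Q : QuiverData) (e f : Q.V) : FA K Q →ₐ[K] FA K (Q.plus e f) :=
  FreeAlgebra.lift K (fun x => FreeAlgebra.ι K (Sum.map id Sum.inl x))

/-- The algebra `B⁺ = kQ⁺/⟨R⟩_{Q⁺}`. -/
abbrev BQAplus (Q : QuiverData) (R : Set (FA K Q)) (e f : Q.V) : Type :=
  BQA K (Q.plus e f) (inclFA K Q e f '' R)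

section OpTensor
variable {K} (S : Type) [Ring S] [Algebra K S]
variable (M N : Type) [AddCommGroup M] [AddCommGroup N] [Module K M] [Module K N]
  [Module Sᵐᵒᵖ N] [SMulCommClass K Sᵐᵒᵖ N]

/-- Right action of `S` on `N` as a `K`-linear endomorphism. -/
def opAct (b : Sᵐᵒᵖ) : N →ₗ[K] N where
  toFun n := b • n
  map_add' := smul_add b
  map_smul' c n := (smul_comm c b n).symm

@[simp] theorem opAct_apply (b : Sᵐᵒᵖ) (n : N) : opAct (K := K) S N b n = b • n := rfl

/-- Right `S`-module structure on `M ⊗[K] N` induced by the right `S`-module structure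
on the right factor `N`. -/
instance Module.opTensor : Module Sᵐᵒᵖ (M ⊗[K] N) where
  smul b z := LinearMap.lTensor M (opAct S N b) z
  one_smul z := by
    show LinearMap.lTensor M (opAct S N 1) z = z
    induction z using TensorProduct.induction_on with
    | zero => simp
    | tmul m n => simp
    | add x y hx hy => rw [map_add, hx, hy]
  mul_smul b b' z := by
    show LinearMap.lTensor M (opAct S N (b * b')) z
      = LinearMap.lTensor M (opAct S N b) (LinearMap.lTensor M (opAct S N b') z)
    induction z using TensorProduct.induction_on with
    | zero => simp
    | tmul m n => simp [mul_smul]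
    | add x y hx hy => rw [map_add, hx, hy, map_add, map_add]
  smul_zero b := map_zero _
  smul_add b z z' := map_add _ z z'
  add_smul b b' z := by
    show LinearMap.lTensor M (opAct S N (b + b')) z
      = LinearMap.lTensor M (opAct S N b) z + LinearMap.lTensor M (opAct S N b') z
    induction z using TensorProduct.induction_on with
    | zero => simp
    | tmul m n => simp [add_smul, TensorProduct.tmul_add]
    | add x y hx hy =>
        rw [map_add, hx, hy, map_add, map_add]
        abel
  zero_smul z := by
    show LinearMap.lTensor M (opAct S N 0) z = 0
    induction z using TensorProduct.induction_on with
    | zero => simp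
    | tmul m n => simp
    | add x y hx hy => rw [map_add, hx, hy, add_zero]

theorem opTensor_smul_tmul (b : Sᵐᵒᵖ) (m : M) (n : N) :
    b • (m ⊗ₜ[K] n) = m ⊗ₜ[K] (b • n) := rfl

instance opTensor_smulCommClass [Module S M] [SMulCommClass K S M] :
    SMulCommClass S Sᵐᵒᵖ (M ⊗[K] N) where
  smul_comm a b z := by
    induction z using TensorProduct.induction_on with
    | zero => simp
    | tmul m n =>
        rw [opTensor_smul_tmul, TensorProduct.smul_tmul', TensorProduct.smul_tmul',
          opTensor_smul_tmul]
    | add x y hx hy => rw [smul_add, smul_add, hx, hy, ← smul_add, ← smul_add]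

instance opTensor_isScalarTower [IsScalarTower K Sᵐᵒᵖ N] :
    IsScalarTower K Sᵐᵒᵖ (M ⊗[K] N) where
  smul_assoc c b z := by
    show LinearMap.lTensor M (opAct S N (c • b)) z
      = c • LinearMap.lTensor M (opAct S N b) z
    induction z using TensorProduct.induction_on with
    | zero => simp
    | tmul m n =>
        rw [LinearMap.lTensor_tmul, LinearMap.lTensor_tmul, opAct_apply, opAct_apply,
          smul_assoc, TensorProduct.tmul_smul]
    | add x y hx hy => rw [map_add, hx, hy, map_add, smul_add]

end OpTensor

section Ideals
variable (S : Type) [Ring S] [Algebra K S]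

/-- The left ideal `S·f` as a left `S`-module. -/
def LIdeal (f : S) : Type := Submodule.span S {f}
instance (f : S) : AddCommGroup (LIdeal S f) := inferInstanceAs (AddCommGroup (Submodule.span S {f}))
instance (f : S) : Module S (LIdeal S f) := inferInstanceAs (Module S (Submodule.span S {f}))
instance (f : S) : Module K (LIdeal S f) := inferInstanceAs (Module K (Submodule.span S {f}))
instance (f : S) : IsScalarTower K S (LIdeal S f) :=
  inferInstanceAs (IsScalarTower K S (Submodule.span S {f}))
instance (f : S) : SMulCommClass K S (LIdeal S f) := inferInstance

/-- The right ideal `e·S` as a right `S`-module. -/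
def RIdeal (e : S) : Type := Submodule.span Sᵐᵒᵖ {e}
instance (e : S) : AddCommGroup (RIdeal S e) := inferInstanceAs (AddCommGroup (Submodule.span Sᵐᵒᵖ {e}))
instance (e : S) : Module Sᵐᵒᵖ (RIdeal S e) := inferInstanceAs (Module Sᵐᵒᵖ (Submodule.span Sᵐᵒᵖ {e}))
instance (e : S) : Module K (RIdeal S e) := inferInstanceAs (Module K (Submodule.span Sᵐᵒᵖ {e}))
instance (e : S) : IsScalarTower K Sᵐᵒᵖ (RIdeal S e) :=
  inferInstanceAs (IsScalarTower K Sᵐᵒᵖ (Submodule.span Sᵐᵒᵖ {e}))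
instance (e : S) : SMulCommClass K Sᵐᵒᵖ (RIdeal S e) := inferInstance

/-- The bimodule `S·f ⊗ e·S`. -/
def IdTens (f e : S) : Type := (LIdeal S f) ⊗[K] (RIdeal S e)
instance (f e : S) : AddCommGroup (IdTens K S f e) := inferInstanceAs (AddCommGroup ((LIdeal S f) ⊗[K] (RIdeal S e)))
instance (f e : S) : Module K (IdTens K S f e) := inferInstanceAs (Module K ((LIdeal S f) ⊗[K] (RIdeal S e)))
instance (f e : S) : Module S (IdTens K S f e) := inferInstanceAs (Module S ((LIdeal S f) ⊗[K] (RIdeal S e)))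
instance (f e : S) : Module Sᵐᵒᵖ (IdTens K S f e) := inferInstanceAs (Module Sᵐᵒᵖ ((LIdeal S f) ⊗[K] (RIdeal S e)))
instance (f e : S) : SMulCommClass S Sᵐᵒᵖ (IdTens K S f e) :=
  inferInstanceAs (SMulCommClass S Sᵐᵒᵖ ((LIdeal S f) ⊗[K] (RIdeal S e)))
instance (f e : S) : IsScalarTower K S (IdTens K S f e) :=
  inferInstanceAs (IsScalarTower K S ((LIdeal S f) ⊗[K] (RIdeal S e)))
instance (f e : S) : IsScalarTower K Sᵐᵒᵖ (IdTens K S f e) :=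
  inferInstanceAs (IsScalarTower K Sᵐᵒᵖ ((LIdeal S f) ⊗[K] (RIdeal S e)))

end Ideals

section AddArrowProof

variable (Q : QuiverData) (R : Set (FA K Q)) (e f : Q.V)

theorem mkP_rel {Q' : QuiverData} {R' : Set (FA K Q')} {x y : FA K Q'}
    (h : PathRel K Q' R' x y) : BQA.mk K Q' R' x = BQA.mk K Q' R' y :=
  RingQuot.mkAlgHom_rel K h

theorem vtxIdem_mul (i j : Q.V) :
    vtxIdem K Q R i * vtxIdem K Q R j = if i = j then vtxIdem K Q R i else 0 := by
  unfold vtxIdem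
  rw [← map_mul, mkP_rel K (PathRel.vtx_mul (R := R) i j)]
  split_ifs <;> simp

theorem vtxIdem_idem (i : Q.V) :
    vtxIdem K Q R i * vtxIdem K Q R i = vtxIdem K Q R i := by
  rw [vtxIdem_mul]; simp

/-- The element `f` of `Bf`. -/
def fEl : LIdeal (BQA K Q R) (vtxIdem K Q R f) :=
  ⟨vtxIdem K Q R f, Submodule.mem_span_singleton_self _⟩

/-- The element `e` of `eB`. -/
def eEl : RIdeal (BQA K Q R) (vtxIdem K Q R e) :=
  ⟨vtxIdem K Q R e, Submodule.mem_span_singleton_self _⟩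

/-- The element `f ⊗ e` of `Bf ⊗ eB`. -/
def n0 : IdTens K (BQA K Q R) (vtxIdem K Q R f) (vtxIdem K Q R e) :=
  fEl K Q R f ⊗ₜ[K] eEl K Q R e

theorem LIdeal_mul (x : LIdeal (BQA K Q R) (vtxIdem K Q R f)) :
    x.1 * vtxIdem K Q R f = x.1 := by
  obtain ⟨s, hs⟩ := Submodule.mem_span_singleton.mp x.2
  rw [← hs, smul_eq_mul, mul_assoc, vtxIdem_idem]

theorem RIdeal_mul (y : RIdeal (BQA K Q R) (vtxIdem K Q R e)) :
    vtxIdem K Q R e * y.1 = y.1 := by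
  obtain ⟨s, hs⟩ := Submodule.mem_span_singleton.mp y.2
  have hs' : vtxIdem K Q R e * s.unop = y.1 := by
    rw [← hs]; rfl
  rw [← hs', ← mul_assoc, vtxIdem_idem]

/-- The class of the new arrow in `B⁺`. -/
def aHat : BQAplus K Q R e f :=
  BQA.mk K (Q.plus e f) (inclFA K Q e f '' R) ((Q.plus e f).arr K (Sum.inr ()))

theorem inclFA_vtx (i : Q.V) :
    inclFA K Q e f (Q.vtx K i) = (Q.plus e f).vtx K i := by
  unfold inclFA QuiverData.vtx
  rw [FreeAlgebra.lift_ι_apply]; rfl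

theorem inclFA_arr (a : Q.E) :
    inclFA K Q e f (Q.arr K a) = (Q.plus e f).arr K (Sum.inl a) := by
  unfold inclFA QuiverData.arr
  rw [FreeAlgebra.lift_ι_apply]; rfl

/-- The raw map `kQ → B⁺`. -/
def iotaFA : FA K Q →ₐ[K] BQAplus K Q R e f :=
  (BQA.mk K (Q.plus e f) (inclFA K Q e f '' R)).comp (inclFA K Q e f)

theorem iotaFA_apply (w : FA K Q) :
    iotaFA K Q R e f w = BQA.mk K (Q.plus e f) (inclFA K Q e f '' R) (inclFA K Q e f w) := rfl

theorem iotaFA_rel : ∀ ⦃x y : FA K Q⦄, PathRel K Q R x y →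
    iotaFA K Q R e f x = iotaFA K Q R e f y := by
  intro x y h
  induction h with
  | vtx_mul i j =>
      rw [iotaFA_apply, iotaFA_apply, map_mul, inclFA_vtx, inclFA_vtx,
        mkP_rel K (PathRel.vtx_mul (R := inclFA K Q e f '' R) i j)]
      split_ifs
      · rw [inclFA_vtx]
      · rename_i h1 h2; exact absurd h1 h2
      · rename_i h1 h2; exact absurd h2 h1
      · simp only [map_zero]
  | vtx_sum =>
      rw [iotaFA_apply, iotaFA_apply, map_sum, map_one]
      have : ∀ i ∈ Finset.univ, inclFA K Q e f (Q.vtx K i) = (Q.plus e f).vtx K i :=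
        fun i _ => inclFA_vtx K Q e f i
      erw [Finset.sum_congr rfl this,
        mkP_rel K (PathRel.vtx_sum (R := inclFA K Q e f '' R)), map_one]
  | arr_t a =>
      rw [iotaFA_apply, iotaFA_apply, map_mul, inclFA_vtx, inclFA_arr]
      exact mkP_rel K (PathRel.arr_t (R := inclFA K Q e f '' R) (Sum.inl a))
  | arr_s a =>
      rw [iotaFA_apply, iotaFA_apply, map_mul, inclFA_vtx, inclFA_arr]
      exact mkP_rel K (PathRel.arr_s (R := inclFA K Q e f '' R) (Sum.inl a))
  | rel r hr =>
      rw [iotaFA_apply, iotaFA_apply, map_zero, map_zero,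
        mkP_rel K (PathRel.rel (inclFA K Q e f r) (Set.mem_image_of_mem _ hr)), map_zero]

/-- The algebra map `B → B⁺`. -/
def iotaB : BQA K Q R →ₐ[K] BQAplus K Q R e f :=
  RingQuot.liftAlgHom K ⟨iotaFA K Q R e f, iotaFA_rel K Q R e f⟩

theorem iotaB_mk (w : FA K Q) :
    iotaB K Q R e f (BQA.mk K Q R w)
      = BQA.mk K (Q.plus e f) (inclFA K Q e f '' R) (inclFA K Q e f w) := by
  unfold iotaB BQA.mk
  rw [RingQuot.liftAlgHom_mkAlgHom_apply]
  rfl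

/-- The bilinear map `Bf × eB → B⁺`, `(x, y) ↦ x·a·y`. -/
def chiBil : LIdeal (BQA K Q R) (vtxIdem K Q R f) →ₗ[K]
    RIdeal (BQA K Q R) (vtxIdem K Q R e) →ₗ[K] BQAplus K Q R e f :=
  LinearMap.mk₂ K
    (fun x y => iotaB K Q R e f x.1 * aHat K Q R e f * iotaB K Q R e f y.1)
    (fun x x' y => by
      have h : (x + x').1 = x.1 + x'.1 := rfl
      erw [h, map_add, add_mul, add_mul])
    (fun c x y => by
      have h : (c • x).1 = c • x.1 := rfl
      erw [h, map_smul, smul_mul_assoc, smul_mul_assoc])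
    (fun x y y' => by
      have h : (y + y').1 = y.1 + y'.1 := rfl
      erw [h, map_add, mul_add])
    (fun c x y => by
      have h : (c • y).1 = c • y.1 := rfl
      erw [h, map_smul, mul_smul_comm])

/-- The linear map `N = Bf ⊗ eB → B⁺`. -/
def chiN : IdTens K (BQA K Q R) (vtxIdem K Q R f) (vtxIdem K Q R e) →ₗ[K]
    BQAplus K Q R e f :=
  TensorProduct.lift (chiBil K Q R e f)

theorem chiN_tmul (x : LIdeal (BQA K Q R) (vtxIdem K Q R f))
    (y : RIdeal (BQA K Q R) (vtxIdem K Q R e)) :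
    chiN K Q R e f (x ⊗ₜ[K] y)
      = iotaB K Q R e f x.1 * aHat K Q R e f * iotaB K Q R e f y.1 := by
  exact TensorProduct.lift.tmul x y

theorem iotaB_mul_chiN (b : BQA K Q R)
    (n : IdTens K (BQA K Q R) (vtxIdem K Q R f) (vtxIdem K Q R e)) :
    iotaB K Q R e f b * chiN K Q R e f n = chiN K Q R e f (b • n) := by
  induction n using TensorProduct.induction_on with
  | zero => erw [map_zero, mul_zero]
  | tmul x y =>
      erw [TensorProduct.smul_tmul', chiN_tmul, chiN_tmul]
      have : (b • x).1 = b * x.1 := rfl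
      rw [this, map_mul, mul_assoc, mul_assoc, mul_assoc]
  | add n₁ n₂ h₁ h₂ =>
      erw [smul_add, map_add, map_add, mul_add, h₁, h₂]

theorem chiN_mul_iotaB (b : BQA K Q R)
    (n : IdTens K (BQA K Q R) (vtxIdem K Q R f) (vtxIdem K Q R e)) :
    chiN K Q R e f n * iotaB K Q R e f b
      = chiN K Q R e f (MulOpposite.op b • n) := by
  induction n using TensorProduct.induction_on with
  | zero => erw [map_zero, zero_mul]
  | tmul x y =>
      erw [opTensor_smul_tmul (BQA K Q R), chiN_tmul, chiN_tmul]
      have : (MulOpposite.op b • y).1 = y.1 * b := rfl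
      rw [this, map_mul, mul_assoc]
  | add n₁ n₂ h₁ h₂ =>
      erw [smul_add, map_add, map_add, add_mul, h₁, h₂]

/-- The raw map `FreeAlgebra K (B ⊕ N) → B⁺`. -/
def psiFA : FreeAlgebra K (BQA K Q R ⊕
    IdTens K (BQA K Q R) (vtxIdem K Q R f) (vtxIdem K Q R e)) →ₐ[K]
    BQAplus K Q R e f :=
  FreeAlgebra.lift K (Sum.elim (iotaB K Q R e f) (chiN K Q R e f))

theorem psiFA_inl (b : BQA K Q R) :
    psiFA K Q R e f (FreeAlgebra.ι K (Sum.inl b)) = iotaB K Q R e f b := by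
  unfold psiFA; rw [FreeAlgebra.lift_ι_apply]; rfl

theorem psiFA_inr (n : IdTens K (BQA K Q R) (vtxIdem K Q R f) (vtxIdem K Q R e)) :
    psiFA K Q R e f (FreeAlgebra.ι K (Sum.inr n)) = chiN K Q R e f n := by
  unfold psiFA; rw [FreeAlgebra.lift_ι_apply]; rfl

theorem psiFA_rel : ∀ ⦃x y⦄,
    TensRel K (BQA K Q R) (IdTens K (BQA K Q R) (vtxIdem K Q R f) (vtxIdem K Q R e)) x y →
    psiFA K Q R e f x = psiFA K Q R e f y := by
  intro x y h
  induction h with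
  | b_add b b' => simp only [map_add, psiFA_inl]
  | b_smul c b => simp only [map_smul, psiFA_inl]
  | b_mul b b' => simp only [map_mul, psiFA_inl]
  | b_one => simp only [map_one, psiFA_inl]
  | n_add n n' => simp only [map_add, psiFA_inr]
  | n_smul c n => simp only [map_smul, psiFA_inr]
  | act_left b n =>
      rw [map_mul, psiFA_inl, psiFA_inr, psiFA_inr, iotaB_mul_chiN]
  | act_right b n =>
      rw [map_mul, psiFA_inl, psiFA_inr, psiFA_inr, chiN_mul_iotaB]

/-- The algebra map `T_B(N) → B⁺`. -/
def psi : TensorAlg K (BQA K Q R)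
    (IdTens K (BQA K Q R) (vtxIdem K Q R f) (vtxIdem K Q R e)) →ₐ[K]
    BQAplus K Q R e f :=
  RingQuot.liftAlgHom K ⟨psiFA K Q R e f, psiFA_rel K Q R e f⟩

theorem psi_mk (w) : psi K Q R e f (RingQuot.mkAlgHom K
    (TensRel K (BQA K Q R) (IdTens K (BQA K Q R) (vtxIdem K Q R f) (vtxIdem K Q R e))) w)
    = psiFA K Q R e f w := by
  unfold psi
  rw [RingQuot.liftAlgHom_mkAlgHom_apply]

theorem psi_ofB (b : BQA K Q R) :
    psi K Q R e f (TensorAlg.ofB K (BQA K Q R)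
      (IdTens K (BQA K Q R) (vtxIdem K Q R f) (vtxIdem K Q R e)) b)
    = iotaB K Q R e f b := by
  show psi K Q R e f (RingQuot.mkAlgHom K _ (FreeAlgebra.ι K (Sum.inl b))) = _
  rw [psi_mk, psiFA_inl]

theorem psi_ofN (n : IdTens K (BQA K Q R) (vtxIdem K Q R f) (vtxIdem K Q R e)) :
    psi K Q R e f (TensorAlg.ofN K (BQA K Q R)
      (IdTens K (BQA K Q R) (vtxIdem K Q R f) (vtxIdem K Q R e)) n)
    = chiN K Q R e f n := by
  show psi K Q R e f (RingQuot.mkAlgHom K _ (FreeAlgebra.ι K (Sum.inr n))) = _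
  rw [psi_mk, psiFA_inr]

/-- The raw map `kQ⁺ → T_B(N)`. -/
def phiFA : FA K (Q.plus e f) →ₐ[K] TensorAlg K (BQA K Q R)
    (IdTens K (BQA K Q R) (vtxIdem K Q R f) (vtxIdem K Q R e)) :=
  FreeAlgebra.lift K (fun x : Q.V ⊕ (Q.E ⊕ Unit) =>
    match x with
    | Sum.inl i => TensorAlg.ofB K (BQA K Q R)
        (IdTens K (BQA K Q R) (vtxIdem K Q R f) (vtxIdem K Q R e)) (vtxIdem K Q R i)
    | Sum.inr (Sum.inl a) => TensorAlg.ofB K (BQA K Q R)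
        (IdTens K (BQA K Q R) (vtxIdem K Q R f) (vtxIdem K Q R e))
        (BQA.mk K Q R (Q.arr K a))
    | Sum.inr (Sum.inr _) => TensorAlg.ofN K (BQA K Q R)
        (IdTens K (BQA K Q R) (vtxIdem K Q R f) (vtxIdem K Q R e)) (n0 K Q R e f))

theorem phiFA_vtx (i : Q.V) :
    phiFA K Q R e f ((Q.plus e f).vtx K i)
      = TensorAlg.ofB K (BQA K Q R)
        (IdTens K (BQA K Q R) (vtxIdem K Q R f) (vtxIdem K Q R e)) (vtxIdem K Q R i) := by
  unfold phiFA QuiverData.vtx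
  erw [FreeAlgebra.lift_ι_apply]

theorem phiFA_arr_old (a : Q.E) :
    phiFA K Q R e f ((Q.plus e f).arr K (Sum.inl a))
      = TensorAlg.ofB K (BQA K Q R)
        (IdTens K (BQA K Q R) (vtxIdem K Q R f) (vtxIdem K Q R e))
        (BQA.mk K Q R (Q.arr K a)) := by
  unfold phiFA QuiverData.arr
  erw [FreeAlgebra.lift_ι_apply]

theorem phiFA_arr_new (u : Unit) :
    phiFA K Q R e f ((Q.plus e f).arr K (Sum.inr u))
      = TensorAlg.ofN K (BQA K Q R)
        (IdTens K (BQA K Q R) (vtxIdem K Q R f) (vtxIdem K Q R e)) (n0 K Q R e f) := by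
  unfold phiFA QuiverData.arr
  erw [FreeAlgebra.lift_ι_apply]

theorem phiFA_incl :
    (phiFA K Q R e f).comp (inclFA K Q e f)
      = (TensorAlg.ofB K (BQA K Q R)
          (IdTens K (BQA K Q R) (vtxIdem K Q R f) (vtxIdem K Q R e))).comp
        (BQA.mk K Q R) := by
  apply FreeAlgebra.hom_ext
  funext x
  cases x with
  | inl i =>
      show phiFA K Q R e f (inclFA K Q e f (Q.vtx K i)) = _
      rw [inclFA_vtx, phiFA_vtx]; rfl
  | inr a =>
      show phiFA K Q R e f (inclFA K Q e f (Q.arr K a)) = _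
      rw [inclFA_arr, phiFA_arr_old]; rfl

theorem smul_n0_left (x : LIdeal (BQA K Q R) (vtxIdem K Q R f)) :
    x.1 • n0 K Q R e f = x ⊗ₜ[K] eEl K Q R e := by
  unfold n0
  erw [TensorProduct.smul_tmul']
  congr 1
  apply Subtype.ext
  show x.1 * vtxIdem K Q R f = x.1
  exact LIdeal_mul K Q R f x

theorem smul_eEl_right (y : RIdeal (BQA K Q R) (vtxIdem K Q R e)) :
    MulOpposite.op y.1 • eEl K Q R e = y := by
  apply Subtype.ext
  show vtxIdem K Q R e * y.1 = y.1
  exact RIdeal_mul K Q R e y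

theorem smul_n0 (x : LIdeal (BQA K Q R) (vtxIdem K Q R f))
    (y : RIdeal (BQA K Q R) (vtxIdem K Q R e)) :
    MulOpposite.op y.1 • (x.1 • n0 K Q R e f) = x ⊗ₜ[K] y := by
  erw [smul_n0_left,
    opTensor_smul_tmul (BQA K Q R) (LIdeal (BQA K Q R) (vtxIdem K Q R f))
      (RIdeal (BQA K Q R) (vtxIdem K Q R e)), smul_eEl_right]

theorem phiFA_rel : ∀ ⦃x y⦄,
    PathRel K (Q.plus e f) (inclFA K Q e f '' R) x y →
    phiFA K Q R e f x = phiFA K Q R e f y := by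
  intro x y h
  induction h with
  | vtx_mul i j =>
      erw [map_mul, phiFA_vtx, phiFA_vtx, ← map_mul, vtxIdem_mul]
      split_ifs
      · erw [phiFA_vtx]
      · rename_i h1 h2; exact absurd h1 h2
      · rename_i h1 h2; exact absurd h2 h1
      · simp only [map_zero]
  | vtx_sum =>
      rw [map_sum, map_one]
      have h1 : ∀ i ∈ Finset.univ, phiFA K Q R e f ((Q.plus e f).vtx K i)
          = TensorAlg.ofB K (BQA K Q R)
            (IdTens K (BQA K Q R) (vtxIdem K Q R f) (vtxIdem K Q R e)) (vtxIdem K Q R i) :=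
        fun i _ => phiFA_vtx K Q R e f i
      erw [Finset.sum_congr rfl h1, ← map_sum]
      have h2 : (∑ i : Q.V, vtxIdem K Q R i) = 1 := by
        unfold vtxIdem
        rw [← map_sum, mkP_rel K (PathRel.vtx_sum (R := R)), map_one]
      have h2' : (∑ i : (Q.plus e f).V, vtxIdem K Q R i) = 1 := h2
      rw [h2', map_one]
  | arr_t a =>
      cases a with
      | inl a =>
          erw [map_mul, phiFA_vtx, phiFA_arr_old, ← map_mul]
          congr 1
          unfold vtxIdem
          rw [← map_mul]
          exact mkP_rel K (PathRel.arr_t (R := R) a)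
      | inr u =>
          erw [map_mul, phiFA_vtx, phiFA_arr_new, TensorAlg.ofB_mul_ofN]
          congr 1
          show (fEl K Q R f).1 • n0 K Q R e f = n0 K Q R e f
          rw [smul_n0_left]
          rfl
  | arr_s a =>
      cases a with
      | inl a =>
          erw [map_mul, phiFA_vtx, phiFA_arr_old, ← map_mul]
          congr 1
          unfold vtxIdem
          rw [← map_mul]
          exact mkP_rel K (PathRel.arr_s (R := R) a)
      | inr u =>
          erw [map_mul, phiFA_vtx, phiFA_arr_new, TensorAlg.ofN_mul_ofB]
          congr 1
          show MulOpposite.op (eEl K Q R e).1 • n0 K Q R e f = n0 K Q R e f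
          unfold n0
          erw [opTensor_smul_tmul (BQA K Q R) (LIdeal (BQA K Q R) (vtxIdem K Q R f))
            (RIdeal (BQA K Q R) (vtxIdem K Q R e)), smul_eEl_right]
  | rel r hr =>
      obtain ⟨r₀, hr₀, rfl⟩ := hr
      have h4 := AlgHom.congr_fun (phiFA_incl K Q R e f) r₀
      rw [AlgHom.comp_apply, AlgHom.comp_apply] at h4
      rw [h4, map_zero]
      have hz : BQA.mk K Q R r₀ = 0 := by
        rw [mkP_rel K (PathRel.rel r₀ hr₀), map_zero]
      rw [hz, map_zero]

/-- The algebra map `B⁺ → T_B(N)`. -/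
def phi : BQAplus K Q R e f →ₐ[K] TensorAlg K (BQA K Q R)
    (IdTens K (BQA K Q R) (vtxIdem K Q R f) (vtxIdem K Q R e)) :=
  RingQuot.liftAlgHom K ⟨phiFA K Q R e f, phiFA_rel K Q R e f⟩

theorem phi_mk (w : FA K (Q.plus e f)) :
    phi K Q R e f (BQA.mk K (Q.plus e f) (inclFA K Q e f '' R) w)
      = phiFA K Q R e f w := by
  unfold phi BQA.mk
  rw [RingQuot.liftAlgHom_mkAlgHom_apply]

theorem phi_iotaB (b : BQA K Q R) :
    phi K Q R e f (iotaB K Q R e f b)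
      = TensorAlg.ofB K (BQA K Q R)
          (IdTens K (BQA K Q R) (vtxIdem K Q R f) (vtxIdem K Q R e)) b := by
  obtain ⟨w, rfl⟩ := RingQuot.mkAlgHom_surjective K (PathRel K Q R) b
  show phi K Q R e f (iotaB K Q R e f (BQA.mk K Q R w)) = _
  rw [iotaB_mk, phi_mk]
  have h4 := AlgHom.congr_fun (phiFA_incl K Q R e f) w
  rw [AlgHom.comp_apply, AlgHom.comp_apply] at h4
  exact h4

theorem phi_aHat :
    phi K Q R e f (aHat K Q R e f)
      = TensorAlg.ofN K (BQA K Q R)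
          (IdTens K (BQA K Q R) (vtxIdem K Q R f) (vtxIdem K Q R e)) (n0 K Q R e f) := by
  unfold aHat
  rw [phi_mk, phiFA_arr_new]

theorem phi_chiN (n : IdTens K (BQA K Q R) (vtxIdem K Q R f) (vtxIdem K Q R e)) :
    phi K Q R e f (chiN K Q R e f n)
      = TensorAlg.ofN K (BQA K Q R)
          (IdTens K (BQA K Q R) (vtxIdem K Q R f) (vtxIdem K Q R e)) n := by
  induction n using TensorProduct.induction_on with
  | zero => erw [map_zero, map_zero]
  | tmul x y =>
      rw [chiN_tmul, map_mul, map_mul, phi_iotaB, phi_iotaB, phi_aHat,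
        TensorAlg.ofB_mul_ofN, TensorAlg.ofN_mul_ofB, smul_n0]
  | add n₁ n₂ h₁ h₂ =>
      erw [map_add, map_add, map_add, h₁, h₂]

theorem phi_psi :
    (phi K Q R e f).comp (psi K Q R e f) = AlgHom.id K _ := by
  have key : ((phi K Q R e f).comp (psi K Q R e f)).comp
      (RingQuot.mkAlgHom K (TensRel K (BQA K Q R)
        (IdTens K (BQA K Q R) (vtxIdem K Q R f) (vtxIdem K Q R e))))
      = RingQuot.mkAlgHom K (TensRel K (BQA K Q R)
        (IdTens K (BQA K Q R) (vtxIdem K Q R f) (vtxIdem K Q R e))) := by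
    apply FreeAlgebra.hom_ext
    funext x
    cases x with
    | inl b =>
        show phi K Q R e f (psi K Q R e f (RingQuot.mkAlgHom K _
          (FreeAlgebra.ι K (Sum.inl b)))) = _
        rw [psi_mk, psiFA_inl, phi_iotaB]
        rfl
    | inr n =>
        show phi K Q R e f (psi K Q R e f (RingQuot.mkAlgHom K _
          (FreeAlgebra.ι K (Sum.inr n)))) = _
        rw [psi_mk, psiFA_inr, phi_chiN]
        rfl
  refine AlgHom.ext fun z => ?_
  obtain ⟨w, rfl⟩ := RingQuot.mkAlgHom_surjective K _ z
  exact AlgHom.congr_fun key w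

theorem psi_phi :
    (psi K Q R e f).comp (phi K Q R e f) = AlgHom.id K _ := by
  have key : ((psi K Q R e f).comp (phi K Q R e f)).comp
      (BQA.mk K (Q.plus e f) (inclFA K Q e f '' R))
      = BQA.mk K (Q.plus e f) (inclFA K Q e f '' R) := by
    apply FreeAlgebra.hom_ext
    funext x
    cases x with
    | inl i =>
        show psi K Q R e f (phi K Q R e f (BQA.mk K (Q.plus e f) (inclFA K Q e f '' R)
          ((Q.plus e f).vtx K i))) = _
        erw [phi_mk, phiFA_vtx, psi_ofB]
        show iotaB K Q R e f (BQA.mk K Q R (Q.vtx K i)) = _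
        erw [iotaB_mk, inclFA_vtx]
        rfl
    | inr a =>
        cases a with
        | inl a =>
            show psi K Q R e f (phi K Q R e f (BQA.mk K (Q.plus e f) (inclFA K Q e f '' R)
              ((Q.plus e f).arr K (Sum.inl a)))) = _
            rw [phi_mk, phiFA_arr_old, psi_ofB]
            show iotaB K Q R e f (BQA.mk K Q R (Q.arr K a)) = _
            rw [iotaB_mk, inclFA_arr]
            rfl
        | inr u =>
            show psi K Q R e f (phi K Q R e f (BQA.mk K (Q.plus e f) (inclFA K Q e f '' R)
              ((Q.plus e f).arr K (Sum.inr u)))) = _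
            rw [phi_mk, phiFA_arr_new, psi_ofN]
            unfold n0
            rw [chiN_tmul]
            have hf : iotaB K Q R e f (fEl K Q R f).1
                = BQA.mk K (Q.plus e f) (inclFA K Q e f '' R) ((Q.plus e f).vtx K f) := by
              show iotaB K Q R e f (BQA.mk K Q R (Q.vtx K f)) = _
              rw [iotaB_mk, inclFA_vtx]
            have he : iotaB K Q R e f (eEl K Q R e).1
                = BQA.mk K (Q.plus e f) (inclFA K Q e f '' R) ((Q.plus e f).vtx K e) := by
              show iotaB K Q R e f (BQA.mk K Q R (Q.vtx K e)) = _
              rw [iotaB_mk, inclFA_vtx]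
            rw [hf, he]
            unfold aHat
            have ht : BQA.mk K (Q.plus e f) (inclFA K Q e f '' R)
                  ((Q.plus e f).vtx K f * (Q.plus e f).arr K (Sum.inr ()))
                = BQA.mk K (Q.plus e f) (inclFA K Q e f '' R)
                  ((Q.plus e f).arr K (Sum.inr ())) :=
              mkP_rel K (PathRel.arr_t (R := inclFA K Q e f '' R) (Sum.inr ()))
            have hs : BQA.mk K (Q.plus e f) (inclFA K Q e f '' R)
                  ((Q.plus e f).arr K (Sum.inr ()) * (Q.plus e f).vtx K e)
                = BQA.mk K (Q.plus e f) (inclFA K Q e f '' R)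
                  ((Q.plus e f).arr K (Sum.inr ())) :=
              mkP_rel K (PathRel.arr_s (R := inclFA K Q e f '' R) (Sum.inr ()))
            rw [← map_mul, ht, ← map_mul, hs]
            rfl
  refine AlgHom.ext fun z => ?_
  obtain ⟨w, rfl⟩ := RingQuot.mkAlgHom_surjective K _ z
  exact AlgHom.congr_fun key w

end AddArrowProof

theorem add_arrow_is_tensor_algebra
    (K : Type) [Field K] (Q : QuiverData) (R : Set (FA K Q))
    (hR : RelationsOK K Q R) (e f : Q.V) :
    Nonempty ((BQAplus K Q R e f) ≃ₐ[K]
      (TensorAlg K (BQA K Q R)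
        (IdTens K (BQA K Q R) (vtxIdem K Q R f) (vtxIdem K Q R e)))) := by
  exact ⟨AlgEquiv.ofAlgHom (phi K Q R e f) (psi K Q R e f)
    (phi_psi K Q R e f) (psi_phi K Q R e f)⟩
end
end

section
/- Let B = kQ/⟨R⟩_Q be a bound quiver algebra and α : Q₀ × Q₀ → ℕ. The algebra B^α = kQ^α/⟨R⟩_{Q^α} is finite dimensional if and only if the lengths of relative paths are bounded, which in turn is equivalent to the nonexistence of relative cycles. -/
/-!
STATEMENT 13: Let B = kQ/⟨R⟩_Q be a bound quiver algebra and α : Q₀ × Q₀ → ℕ. The algebra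
B^α = kQ^α/⟨R⟩_{Q^α} is finite dimensional if and only if the lengths of relative paths are
bounded, which in turn is equivalent to the nonexistence of relative cycles.
-/

open scoped TensorProduct
noncomputable section

variable (K : Type) [Field K]

section Alpha
variable (Q : QuiverData) (α : Q.V → Q.V → ℕ)

/-- The new arrows added to `Q` by the map `α`: there are `α f e` new arrows
from `e` to `f`. -/
def NewArrow : Type := Σ f : Q.V, Σ e : Q.V, Fin (α f e)

instance : Fintype (NewArrow Q α) := inferInstanceAs (Fintype (Σ f : Q.V, Σ e : Q.V, Fin (α f e)))
instance : DecidableEq (NewArrow Q α) :=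
  inferInstanceAs (DecidableEq (Σ f : Q.V, Σ e : Q.V, Fin (α f e)))

/-- Source vertex of a new arrow. -/
def NewArrow.src (a : NewArrow Q α) : Q.V := a.2.1
/-- Target vertex of a new arrow. -/
def NewArrow.tgt (a : NewArrow Q α) : Q.V := a.1

/-- The quiver `Q^α`, obtained from `Q` by adding `α f e` new arrows from `e` to `f`
for each pair of vertices. -/
def QuiverData.alpha : QuiverData where
  V := Q.V
  E := Q.E ⊕ NewArrow Q α
  s := Sum.elim Q.s (fun a => a.src)
  t := Sum.elim Q.t (fun a => a.tgt)

/-- The inclusion of the free algebra of `Q` into that of `Q^α`. -/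
def inclFAalpha : FA K Q →ₐ[K] FA K (Q.alpha α) :=
  FreeAlgebra.lift K (fun x => FreeAlgebra.ι K (Sum.map id Sum.inl x))

/-- The algebra `B^α = kQ^α/⟨R⟩_{Q^α}`. -/
abbrev BQAalpha (R : Set (FA K Q)) : Type := BQA K (Q.alpha α) (inclFAalpha K Q α '' R)

variable (R : Set (FA K Q))

/-- A pair of new arrows `(a₂, a₁)` is linked if `s(a₂)·B·t(a₁) ≠ 0`. -/
def Linked (a₂ a₁ : NewArrow Q α) : Prop :=
  ∃ b : BQA K Q R, vtxIdem K Q R a₂.src * b * vtxIdem K Q R a₁.tgt ≠ 0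

/-- A relative path of length `n + 1`: a sequence of `n + 1` new arrows, consecutively
linked.  (`arr 0` is the first arrow `a₁` of the relative path `aₙ₊₁ ⋯ a₁`.) -/
structure RelPath (n : ℕ) where
  arr : Fin (n+1) → NewArrow Q α
  linked : ∀ i : Fin n, Linked K Q α R (arr i.succ) (arr i.castSucc)

/-- The source vertex of a relative path. -/
def RelPath.src {n : ℕ} (γ : RelPath K Q α R n) : Q.V := (γ.arr 0).src
/-- The target vertex of a relative path. -/
def RelPath.tgt {n : ℕ} (γ : RelPath K Q α R n) : Q.V := (γ.arr (Fin.last n)).tgt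

/-- The corner subspace `x·B·y` of `B`. -/
def corner (x y : Q.V) : Submodule K (BQA K Q R) :=
  Submodule.span K {z | ∃ b : BQA K Q R, z = vtxIdem K Q R x * b * vtxIdem K Q R y}

/-- `dim_k γ = ∏ dim_k (s(a_{i+1})·B·t(a_i))` for a relative path `γ`;
it is `1` for relative paths of length one. -/
def RelPath.dimk {n : ℕ} (γ : RelPath K Q α R n) : ℕ :=
  ∏ i : Fin n, Module.finrank K (corner K Q R (γ.arr i.succ).src (γ.arr i.castSucc).tgt)

/-- A relative path is a relative cycle if moreover `(a₁, aₙ₊₁)` is linked. -/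
def RelPath.IsCycle {n : ℕ} (γ : RelPath K Q α R n) : Prop :=
  Linked K Q α R (γ.arr 0) (γ.arr (Fin.last n))

end Alpha

-- ============ new development: generic lemmas ============
namespace Stmt13
section Generic
variable {K} (Q : QuiverData) (R : Set (FA K Q))

lemma mkB_rel {x y : FA K Q} (h : PathRel K Q R x y) : BQA.mk K Q R x = BQA.mk K Q R y :=
  RingQuot.mkAlgHom_rel K h

/-- class of an arrow -/
def arrB (a : Q.E) : BQA K Q R := BQA.mk K Q R (Q.arr K a)

lemma vtx_mul_vtx (i j : Q.V) :
    vtxIdem K Q R i * vtxIdem K Q R j = if i = j then vtxIdem K Q R i else 0 := by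
  have h := mkB_rel Q R (PathRel.vtx_mul (K := K) (R := R) i j)
  rw [map_mul] at h
  rw [vtxIdem, vtxIdem, h]
  split <;> simp [vtxIdem]

lemma vtx_idem (i : Q.V) : vtxIdem K Q R i * vtxIdem K Q R i = vtxIdem K Q R i := by
  rw [vtx_mul_vtx, if_pos rfl]

lemma sum_vtx : (∑ i : Q.V, vtxIdem K Q R i) = 1 := by
  have h := mkB_rel Q R (PathRel.vtx_sum (K := K) (R := R))
  rw [map_sum, map_one] at h
  exact h

lemma vtx_t_mul_arr (a : Q.E) : vtxIdem K Q R (Q.t a) * arrB Q R a = arrB Q R a := by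
  have h := mkB_rel Q R (PathRel.arr_t (K := K) (R := R) a)
  rw [map_mul] at h; exact h

lemma arr_mul_vtx_s (a : Q.E) : arrB Q R a * vtxIdem K Q R (Q.s a) = arrB Q R a := by
  have h := mkB_rel Q R (PathRel.arr_s (K := K) (R := R) a)
  rw [map_mul] at h; exact h

lemma mkB_rel_zero {r : FA K Q} (hr : r ∈ R) : BQA.mk K Q R r = 0 := by
  have h := mkB_rel Q R (PathRel.rel (K := K) r hr)
  rw [map_zero] at h; exact h

/-- word in the free algebra attached to a list of arrows (in multiplication order) -/
def wordFA (l : List Q.E) : FA K Q := (l.map (Q.arr K)).prod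

lemma wordFA_nil : wordFA (K := K) Q ([] : List Q.E) = 1 := rfl

lemma wordFA_cons (a : Q.E) (l : List Q.E) :
    wordFA (K := K) Q (a :: l) = Q.arr K a * wordFA (K := K) Q l := by
  simp [wordFA]

lemma wordFA_append (l₁ l₂ : List Q.E) :
    wordFA (K := K) Q (l₁ ++ l₂) = wordFA (K := K) Q l₁ * wordFA (K := K) Q l₂ := by
  simp [wordFA]

/-- class of a word in the bound quiver algebra -/
def wordB (l : List Q.E) : BQA K Q R := BQA.mk K Q R (wordFA (K := K) Q l)

lemma wordB_nil : wordB Q R ([] : List Q.E) = 1 := by simp [wordB, wordFA_nil]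

lemma wordB_cons (a : Q.E) (l : List Q.E) :
    wordB Q R (a :: l) = arrB Q R a * wordB Q R l := by
  simp [wordB, wordFA_cons, map_mul, arrB]

lemma wordB_append (l₁ l₂ : List Q.E) :
    wordB Q R (l₁ ++ l₂) = wordB Q R l₁ * wordB Q R l₂ := by
  simp [wordB, wordFA_append, map_mul]

/-- Gluedness (composability) of a list of arrows in multiplication order. -/
def Glued (l : List Q.E) : Prop := l.Chain' (fun x y => Q.s x = Q.t y)

lemma wordB_eq_zero_of_not_glued {l : List Q.E} (h : ¬ Glued Q l) : wordB Q R l = 0 := by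
  induction l with
  | nil => exact absurd List.isChain_nil h
  | cons a l ih =>
    cases l with
    | nil => exact absurd (List.isChain_singleton a) h
    | cons b t =>
      simp only [Glued, List.Chain'] at h
      rw [List.isChain_cons_cons] at h
      push_neg at h
      by_cases hab : Q.s a = Q.t b
      · have h2 : ¬ Glued Q (b :: t) := h hab
        rw [wordB_cons, ih h2, mul_zero]
      · rw [wordB_cons, wordB_cons, ← arr_mul_vtx_s, ← vtx_t_mul_arr (a := b),
          mul_assoc, mul_assoc, ← mul_assoc (vtxIdem K Q R (Q.s a)), vtx_mul_vtx,
          if_neg hab]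
        simp

end Generic
end Stmt13

namespace Stmt13
section Generic2
variable {K : Type} [Field K] (Q : QuiverData) (R : Set (FA K Q))

lemma chainWord_ofList (l : List Q.E) :
    chainWord K Q (l.reverse.get) = wordFA (K := K) Q l := by
  unfold chainWord wordFA
  rw [List.ofFn_get, List.reverse_reverse]

lemma composable_ofList {l : List Q.E} (h : Glued Q l) : Composable Q (l.reverse.get) := by
  intro i hi
  have h' : l.reverse.Chain' (fun x y => Q.s y = Q.t x) := List.isChain_reverse.mpr h
  simp only [List.Chain'] at h'
  rw [List.isChain_iff_getElem] at h'
  exact h' i (by omega)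

lemma wordB_eq_zero_of_glued_long {m : ℕ}
    (hAdm : ∀ n, m ≤ n → ∀ c : Fin n → Q.E, Composable Q c →
      BQA.mk K Q R (chainWord K Q c) = 0)
    {l : List Q.E} (hg : Glued Q l) (hl : m ≤ l.length) : wordB Q R l = 0 := by
  have h := hAdm l.reverse.length (by simpa using hl) l.reverse.get (composable_ofList Q hg)
  rw [chainWord_ofList] at h
  exact h

lemma wordB_eq_zero_of_long {m : ℕ}
    (hAdm : ∀ n, m ≤ n → ∀ c : Fin n → Q.E, Composable Q c →
      BQA.mk K Q R (chainWord K Q c) = 0)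
    {l : List Q.E} (hl : m ≤ l.length) : wordB Q R l = 0 := by
  by_cases hg : Glued Q l
  · exact wordB_eq_zero_of_glued_long Q R hAdm hg hl
  · exact wordB_eq_zero_of_not_glued Q R hg

lemma vtx_mul_wordB (v : Q.V) (a : Q.E) (l : List Q.E) :
    vtxIdem K Q R v * wordB Q R (a :: l) =
      if v = Q.t a then wordB Q R (a :: l) else 0 := by
  rcases eq_or_ne v (Q.t a) with h | h
  · subst h
    rw [if_pos rfl, wordB_cons, ← mul_assoc, vtx_t_mul_arr]
  · rw [if_neg h, wordB_cons, ← vtx_t_mul_arr (a := a), ← mul_assoc, ← mul_assoc,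
      vtx_mul_vtx, if_neg h]
    simp

lemma wordB_mul_vtx (v : Q.V) (a : Q.E) (l : List Q.E) :
    wordB Q R (l ++ [a]) * vtxIdem K Q R v =
      if Q.s a = v then wordB Q R (l ++ [a]) else 0 := by
  rcases eq_or_ne (Q.s a) v with h | h
  · subst h
    rw [if_pos rfl, wordB_append, wordB_cons, wordB_nil, mul_one, mul_assoc, arr_mul_vtx_s]
  · rw [if_neg h, wordB_append, wordB_cons, wordB_nil, mul_one, ← arr_mul_vtx_s (a := a),
      mul_assoc, mul_assoc, vtx_mul_vtx, if_neg h]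
    simp

/-- The bound quiver algebra of an admissible pair is finite dimensional. -/
theorem finiteDimensional_BQA (hAdm : Admissible K Q R) : FiniteDimensional K (BQA K Q R) := by
  obtain ⟨m, hm⟩ := hAdm
  -- replace m by m+1 so that m ≥ 1
  set U : Set (BQA K Q R) :=
    wordB Q R '' {l : List Q.E | l.length ≤ m + 1} ∪
      Set.range (vtxIdem K Q R) with hU
  have hUfin : U.Finite := by
    apply Set.Finite.union
    · exact Set.Finite.image _ (List.finite_length_le _ _)
    · exact Set.finite_range _
  have hmul : ∀ x ∈ U, ∀ y ∈ U, x * y ∈ Submodule.span K U := by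
    rintro x hx y hy
    have hzero : ∀ l : List Q.E, m + 1 < l.length → wordB Q R l = 0 := fun l hl =>
      wordB_eq_zero_of_long Q R hm (by omega)
    rcases hx with ⟨l₁, hl₁, rfl⟩ | ⟨v, rfl⟩
    · rcases hy with ⟨l₂, hl₂, rfl⟩ | ⟨w, rfl⟩
      · rw [← wordB_append]
        by_cases h : (l₁ ++ l₂).length ≤ m + 1
        · exact Submodule.subset_span (Or.inl ⟨_, h, rfl⟩)
        · rw [hzero _ (by omega)]; exact Submodule.zero_mem _
      · rcases List.eq_nil_or_concat l₁ with rfl | ⟨l', a, rfl⟩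
        · rw [wordB_nil, one_mul]
          exact Submodule.subset_span (Or.inr ⟨w, rfl⟩)
        · rw [List.concat_eq_append] at hl₁ ⊢
          rw [wordB_mul_vtx]
          split
          · exact Submodule.subset_span (Or.inl ⟨_, hl₁, rfl⟩)
          · exact Submodule.zero_mem _
    · rcases hy with ⟨l₂, hl₂, rfl⟩ | ⟨w, rfl⟩
      · rcases l₂ with _ | ⟨a, l'⟩
        · rw [wordB_nil, mul_one]
          exact Submodule.subset_span (Or.inr ⟨v, rfl⟩)
        · rw [vtx_mul_wordB]
          split
          · exact Submodule.subset_span (Or.inl ⟨_, hl₂, rfl⟩)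
          · exact Submodule.zero_mem _
      · rw [vtx_mul_vtx]
        split
        · exact Submodule.subset_span (Or.inr ⟨v, rfl⟩)
        · exact Submodule.zero_mem _
  have hspan : Submodule.span K U = ⊤ := by
    rw [eq_top_iff]
    intro x _
    obtain ⟨y, rfl⟩ := RingQuot.mkAlgHom_surjective K (PathRel K Q R) x
    show BQA.mk K Q R y ∈ Submodule.span K U
    induction y using FreeAlgebra.induction with
    | grade0 r =>
      have h1 : (BQA.mk K Q R) (algebraMap K _ r) = r • 1 := by
        rw [AlgHom.commutes, Algebra.algebraMap_eq_smul_one]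
      rw [h1]
      apply Submodule.smul_mem
      rw [← sum_vtx Q R]
      exact Submodule.sum_mem _ fun v _ => Submodule.subset_span (Or.inr ⟨v, rfl⟩)
    | grade1 x =>
      rcases x with v | a
      · exact Submodule.subset_span (Or.inr ⟨v, rfl⟩)
      · have : BQA.mk K Q R (FreeAlgebra.ι K (Sum.inr a)) = wordB Q R [a] := by
          simp [wordB, wordFA, QuiverData.arr]
        rw [this]
        exact Submodule.subset_span (Or.inl ⟨[a], by simp, rfl⟩)
    | mul x y hx hy =>
      rw [map_mul]
      have h2 : Submodule.span K U * Submodule.span K U ≤ Submodule.span K U := by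
        rw [Submodule.span_mul_span]
        rw [Submodule.span_le]
        rintro z ⟨u, hu, w, hw, rfl⟩
        exact hmul u hu w hw
      exact h2 (Submodule.mul_mem_mul (hx trivial) (hy trivial))
    | add x y hx hy =>
      rw [map_add]; exact Submodule.add_mem _ (hx trivial) (hy trivial)
  have : Module.Finite K (BQA K Q R) := by
    rw [Module.finite_def, Submodule.fg_def]
    exact ⟨U, hUfin, hspan⟩
  exact this

end Generic2
end Stmt13
namespace Stmt13
section Sigma
variable {K : Type} [Field K] (Q : QuiverData) (R : Set (FA K Q))

/-- generators for the representation on functions on vertices -/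
def sigmaGen (K : Type) [Field K] (Q' : QuiverData) : (Q'.V ⊕ Q'.E) → (Q'.V → K) := fun x =>
  match x with
  | Sum.inl v => Pi.single v 1
  | Sum.inr _ => 0

lemma sigmaGen_rel (hR : RelationsOK K Q R) :
    ∀ ⦃x y : FA K Q⦄, PathRel K Q R x y →
      FreeAlgebra.lift K (sigmaGen K Q) x = FreeAlgebra.lift K (sigmaGen K Q) y := by
  have harr : ∀ a : Q.E, FreeAlgebra.lift K (sigmaGen K Q) (Q.arr K a) = 0 := by
    intro a; rw [QuiverData.arr, FreeAlgebra.lift_ι_apply]; rfl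
  have hvtx : ∀ v : Q.V, FreeAlgebra.lift K (sigmaGen K Q) (Q.vtx K v) = Pi.single v 1 := by
    intro v; rw [QuiverData.vtx, FreeAlgebra.lift_ι_apply]; rfl
  intro x y h
  induction h with
  | vtx_mul i j =>
    rw [map_mul, hvtx, hvtx, apply_ite (FreeAlgebra.lift K (sigmaGen K Q)), hvtx, map_zero]
    funext w
    by_cases hij : i = j <;> by_cases hwi : w = i <;> by_cases hwj : w = j <;>
      simp_all [Pi.single_apply]
  | vtx_sum =>
    rw [map_sum, map_one]
    funext w
    simp [hvtx, Pi.single_apply]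
  | arr_t a => simp [map_mul, harr]
  | arr_s a => simp [map_mul, harr]
  | rel r hr =>
    rw [map_zero]
    have h1 : ∀ w ∈ lenTwoWords K Q, FreeAlgebra.lift K (sigmaGen K Q) w = 0 := by
      rintro w ⟨n, hn, c, hc, rfl⟩
      unfold chainWord
      rw [map_list_prod]
      have hlen : ((List.ofFn c).reverse.map (Q.arr K)).length = n := by simp
      have hne : ((List.ofFn c).reverse.map (Q.arr K)) ≠ [] := by
        intro h; rw [h] at hlen; simp at hlen; omega
      obtain ⟨x, hx⟩ := List.exists_mem_of_ne_nil _ hne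
      apply List.prod_eq_zero
      refine List.mem_map.mpr ⟨x, hx, ?_⟩
      obtain ⟨a, _, rfl⟩ := List.mem_map.mp hx
      exact harr a
    have hmem := hR hr
    clear hr
    induction hmem using Submodule.span_induction with
    | mem w hw => exact h1 w hw
    | zero => exact map_zero _
    | add x y _ _ hx hy => rw [map_add, hx, hy, add_zero]
    | smul c x _ hx => rw [map_smul, hx, smul_zero]

/-- The representation of the bound quiver algebra on functions on vertices. -/
def sigmaRep (hR : RelationsOK K Q R) : BQA K Q R →ₐ[K] (Q.V → K) :=
  RingQuot.liftAlgHom K ⟨FreeAlgebra.lift K (sigmaGen K Q), sigmaGen_rel Q R hR⟩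

lemma vtxIdem_ne_zero (hR : RelationsOK K Q R) (v : Q.V) : vtxIdem K Q R v ≠ 0 := by
  intro h
  have h2 : sigmaRep Q R hR (vtxIdem K Q R v) = Pi.single v 1 := by
    rw [vtxIdem, BQA.mk, sigmaRep, RingQuot.liftAlgHom_mkAlgHom_apply,
      QuiverData.vtx, FreeAlgebra.lift_ι_apply]
    rfl
  rw [h, map_zero] at h2
  have := congrFun h2 v
  simp [Pi.single_apply] at this
end Sigma
end Stmt13
namespace Stmt13
section Incl
variable {K : Type} [Field K] (Q : QuiverData) (α : Q.V → Q.V → ℕ) (R : Set (FA K Q))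

lemma incl_vtx (v : Q.V) :
    inclFAalpha K Q α (Q.vtx K v) = (Q.alpha α).vtx K v := by
  rw [QuiverData.vtx, inclFAalpha, FreeAlgebra.lift_ι_apply]
  rfl

lemma incl_arr (a : Q.E) :
    inclFAalpha K Q α (Q.arr K a) = (Q.alpha α).arr K (Sum.inl a) := by
  rw [QuiverData.arr, inclFAalpha, FreeAlgebra.lift_ι_apply]
  rfl

lemma incl_rel : ∀ ⦃x y : FA K Q⦄, PathRel K Q R x y →
    (BQA.mk K (Q.alpha α) (inclFAalpha K Q α '' R)).comp (inclFAalpha K Q α) x =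
    (BQA.mk K (Q.alpha α) (inclFAalpha K Q α '' R)).comp (inclFAalpha K Q α) y := by
  intro x y h
  simp only [AlgHom.coe_comp, Function.comp_apply]
  induction h with
  | vtx_mul i j =>
    rw [map_mul, map_mul, incl_vtx, incl_vtx, apply_ite (inclFAalpha K Q α), map_zero,
      incl_vtx, apply_ite (BQA.mk K (Q.alpha α) (inclFAalpha K Q α '' R)), map_zero]
    exact vtx_mul_vtx (Q.alpha α) _ i j
  | vtx_sum =>
    rw [map_sum, map_sum, map_one, map_one]
    simp only [incl_vtx]
    exact sum_vtx (Q.alpha α) _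
  | arr_t a =>
    rw [map_mul, map_mul, incl_vtx, incl_arr]
    exact vtx_t_mul_arr (Q.alpha α) _ (Sum.inl a)
  | arr_s a =>
    rw [map_mul, map_mul, incl_vtx, incl_arr]
    exact arr_mul_vtx_s (Q.alpha α) _ (Sum.inl a)
  | rel r hr =>
    rw [map_zero, map_zero]
    exact mkB_rel_zero (Q.alpha α) _ ⟨r, hr, rfl⟩

/-- The canonical map `B → B^α`. -/
def inclB : BQA K Q R →ₐ[K] BQAalpha K Q α R :=
  RingQuot.liftAlgHom K
    ⟨(BQA.mk K (Q.alpha α) (inclFAalpha K Q α '' R)).comp (inclFAalpha K Q α),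
      incl_rel Q α R⟩

lemma inclB_mk (x : FA K Q) :
    inclB Q α R (BQA.mk K Q R x) =
      BQA.mk K (Q.alpha α) (inclFAalpha K Q α '' R) (inclFAalpha K Q α x) := by
  rw [BQA.mk, inclB, RingQuot.liftAlgHom_mkAlgHom_apply]
  rfl

lemma inclB_vtx (v : Q.V) :
    inclB Q α R (vtxIdem K Q R v) = vtxIdem K (Q.alpha α) (inclFAalpha K Q α '' R) v := by
  rw [vtxIdem, inclB_mk, incl_vtx]
  rfl

/-- The class of a new arrow in `B^α`. -/
def newArrB (a : NewArrow Q α) : BQAalpha K Q α R :=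
  arrB (Q.alpha α) (inclFAalpha K Q α '' R) (Sum.inr a)

lemma sandwich_zero {a₂ a₁ : NewArrow Q α} (h : ¬ Linked K Q α R a₂ a₁) (b : BQA K Q R) :
    newArrB Q α R a₂ * inclB Q α R b * newArrB Q α R a₁ = 0 := by
  have h0 : ∀ b' : BQA K Q R,
      vtxIdem K Q R a₂.src * b' * vtxIdem K Q R a₁.tgt = 0 := by
    intro b'
    by_contra hb
    exact h ⟨b', hb⟩
  have e2 : newArrB Q α R a₂ =
      newArrB Q α R a₂ * vtxIdem K (Q.alpha α) (inclFAalpha K Q α '' R) a₂.src :=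
    (arr_mul_vtx_s (Q.alpha α) _ (Sum.inr a₂)).symm
  have e1 : newArrB Q α R a₁ =
      vtxIdem K (Q.alpha α) (inclFAalpha K Q α '' R) a₁.tgt * newArrB Q α R a₁ :=
    (vtx_t_mul_arr (Q.alpha α) _ (Sum.inr a₁)).symm
  have key : vtxIdem K (Q.alpha α) (inclFAalpha K Q α '' R) a₂.src * inclB Q α R b *
      vtxIdem K (Q.alpha α) (inclFAalpha K Q α '' R) a₁.tgt = 0 := by
    rw [← inclB_vtx, ← inclB_vtx, ← map_mul, ← map_mul, h0 b, map_zero]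
  have key2 : vtxIdem K (Q.alpha α) (inclFAalpha K Q α '' R) a₂.src * (inclB Q α R b *
      (vtxIdem K (Q.alpha α) (inclFAalpha K Q α '' R) a₁.tgt * newArrB Q α R a₁)) = 0 := by
    have h3 := congrArg (· * newArrB Q α R a₁) key
    simpa [mul_assoc] using h3
  calc newArrB Q α R a₂ * inclB Q α R b * newArrB Q α R a₁
      = (newArrB Q α R a₂ * vtxIdem K (Q.alpha α) (inclFAalpha K Q α '' R) a₂.src) *
        inclB Q α R b *
        (vtxIdem K (Q.alpha α) (inclFAalpha K Q α '' R) a₁.tgt * newArrB Q α R a₁) := by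
        rw [← e2, ← e1]
    _ = newArrB Q α R a₂ *
        (vtxIdem K (Q.alpha α) (inclFAalpha K Q α '' R) a₂.src * (inclB Q α R b *
          (vtxIdem K (Q.alpha α) (inclFAalpha K Q α '' R) a₁.tgt * newArrB Q α R a₁))) := by
        simp only [mul_assoc]
    _ = 0 := by rw [key2, mul_zero]
end Incl
end Stmt13
namespace Stmt13
section Span
variable {K : Type} [Field K] (Q : QuiverData) (α : Q.V → Q.V → ℕ) (R : Set (FA K Q))

/-- Spanning sets of `B^α` indexed by lists of new arrows. -/
def PSet : List (NewArrow Q α) → Set (BQAalpha K Q α R)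
  | [] => Set.range (inclB Q α R)
  | a :: A => {z | ∃ b : BQA K Q R, ∃ y ∈ PSet A, z = inclB Q α R b * (newArrB Q α R a * y)}

lemma inclB_mul_mem {A : List (NewArrow Q α)} (b : BQA K Q R)
    {v : BQAalpha K Q α R} (hv : v ∈ PSet Q α R A) :
    inclB Q α R b * v ∈ PSet Q α R A := by
  induction A generalizing v with
  | nil =>
    obtain ⟨c, rfl⟩ := hv
    exact ⟨b * c, by rw [map_mul]⟩
  | cons a A ih =>
    obtain ⟨c, y, hy, rfl⟩ := hv
    exact ⟨b * c, y, hy, by rw [map_mul, mul_assoc]⟩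

lemma PSet_mul_mem {A A' : List (NewArrow Q α)} {u v : BQAalpha K Q α R}
    (hu : u ∈ PSet Q α R A) (hv : v ∈ PSet Q α R A') :
    u * v ∈ PSet Q α R (A ++ A') := by
  induction A generalizing u with
  | nil =>
    obtain ⟨b, rfl⟩ := hu
    simpa using inclB_mul_mem Q α R b hv
  | cons a A ih =>
    obtain ⟨b, y, hy, rfl⟩ := hu
    refine ⟨b, y * v, ih hy, ?_⟩
    simp [mul_assoc]

lemma PSet_zero_of_not_chain' {A : List (NewArrow Q α)}
    (h : ¬ A.Chain' (Linked K Q α R)) {z : BQAalpha K Q α R}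
    (hz : z ∈ PSet Q α R A) : z = 0 := by
  induction A generalizing z with
  | nil => exact absurd List.isChain_nil h
  | cons a A ih =>
    cases A with
    | nil => exact absurd (List.isChain_singleton a) h
    | cons b A' =>
      simp only [List.Chain'] at h
      rw [List.isChain_cons_cons] at h
      push_neg at h
      obtain ⟨c, y, hy, rfl⟩ := hz
      by_cases hl : Linked K Q α R a b
      · have h2 := ih (h hl) hy
        rw [h2, mul_zero, mul_zero]
      · obtain ⟨d, y', hy', rfl⟩ := hy
        have hsand := sandwich_zero Q α R hl d
        calc inclB Q α R c * (newArrB Q α R a * (inclB Q α R d * (newArrB Q α R b * y')))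
            = inclB Q α R c * ((newArrB Q α R a * inclB Q α R d * newArrB Q α R b) * y') := by
              simp [mul_assoc]
          _ = 0 := by rw [hsand, zero_mul, mul_zero]

lemma relPath_of_chain' {A : List (NewArrow Q α)} {k : ℕ} (hlen : A.length = k + 1)
    (h : A.Chain' (Linked K Q α R)) : Nonempty (RelPath K Q α R k) := by
  have hrev : A.reverse.Chain' (fun x y => Linked K Q α R y x) := List.isChain_reverse.mpr h
  simp only [List.Chain'] at hrev
  rw [List.isChain_iff_getElem] at hrev
  have hlen' : A.reverse.length = k + 1 := by simpa using hlen
  refine ⟨⟨fun i => A.reverse.get (Fin.cast hlen'.symm i), ?_⟩⟩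
  intro i
  exact hrev i.val (by omega)

/-- bilinear multiplication map used for the spanning sets -/
def bilinF (a : NewArrow Q α) : BQA K Q R →ₗ[K] BQAalpha K Q α R →ₗ[K] BQAalpha K Q α R :=
  LinearMap.mk₂ K (fun b y => inclB Q α R b * (newArrB Q α R a * y))
    (fun b b' y => by simp [map_add, add_mul])
    (fun c b y => by simp [map_smul, smul_mul_assoc])
    (fun b y y' => by simp [mul_add])
    (fun c b y => by simp [mul_smul_comm])

lemma PSet_cons_eq (a : NewArrow Q α) (A : List (NewArrow Q α)) :
    PSet Q α R (a :: A) =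
      Set.image2 (fun b y => inclB Q α R b * (newArrB Q α R a * y))
        (Set.univ : Set (BQA K Q R)) (PSet Q α R A) := by
  ext z
  constructor
  · rintro ⟨b, y, hy, rfl⟩
    exact ⟨b, trivial, y, hy, rfl⟩
  · rintro ⟨b, -, y, hy, rfl⟩
    exact ⟨b, y, hy, rfl⟩

lemma fd_PSet (hAdm : Admissible K Q R) (A : List (NewArrow Q α)) :
    FiniteDimensional K (Submodule.span K (PSet Q α R A)) := by
  haveI hB : FiniteDimensional K (BQA K Q R) := finiteDimensional_BQA Q R hAdm
  induction A with
  | nil =>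
    have : PSet Q α R ([] : List (NewArrow Q α)) =
        ↑(LinearMap.range (inclB Q α R).toLinearMap) := by
      rw [PSet]; rfl
    rw [this, Submodule.span_eq]
    infer_instance
  | cons a A ih =>
    rw [PSet_cons_eq]
    have heq : Set.image2 (fun b y => inclB Q α R b * (newArrB Q α R a * y))
        (Set.univ : Set (BQA K Q R)) (PSet Q α R A) =
        Set.image2 (fun m n => bilinF Q α R a m n)
        (Set.univ : Set (BQA K Q R)) (PSet Q α R A) := rfl
    rw [heq, ← Submodule.map₂_span_span K (bilinF Q α R a)]
    have hFG1 : (Submodule.span K (Set.univ : Set (BQA K Q R))).FG := by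
      rw [Submodule.span_univ]
      exact Module.Finite.iff_fg.mp inferInstance
    have hFG2 : (Submodule.span K (PSet Q α R A)).FG := Module.Finite.iff_fg.mp ih
    obtain ⟨s, hs⟩ := hFG1
    obtain ⟨t, ht⟩ := hFG2
    rw [← hs, ← ht, Submodule.map₂_span_span]
    exact FiniteDimensional.span_of_finite K (Set.Finite.image2 _ s.finite_toSet t.finite_toSet)

theorem finiteDimensional_BQAalpha (hAdm : Admissible K Q R) {L : ℕ}
    (hL : ∀ n : ℕ, Nonempty (RelPath K Q α R n) → n + 1 ≤ L) :
    FiniteDimensional K (BQAalpha K Q α R) := by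
  haveI hB : FiniteDimensional K (BQA K Q R) := finiteDimensional_BQA Q R hAdm
  set U : Set (BQAalpha K Q α R) :=
    ⋃ (A : {A : List (NewArrow Q α) // A.length ≤ L}), PSet Q α R A.1 with hU
  have hmemU : ∀ (A : List (NewArrow Q α)), A.length ≤ L →
      ∀ z ∈ PSet Q α R A, z ∈ U := by
    intro A hA z hz
    rw [hU]
    exact Set.mem_iUnion.mpr ⟨⟨A, hA⟩, hz⟩
  have hmul : ∀ x ∈ U, ∀ y ∈ U, x * y ∈ Submodule.span K U := by
    intro x hx y hy
    rw [hU] at hx hy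
    obtain ⟨⟨A, hA⟩, hx⟩ := Set.mem_iUnion.mp hx
    obtain ⟨⟨A', hA'⟩, hy⟩ := Set.mem_iUnion.mp hy
    have hmem := PSet_mul_mem Q α R hx hy
    by_cases hlen : (A ++ A').length ≤ L
    · exact Submodule.subset_span (hmemU _ hlen _ hmem)
    · by_cases hch : (A ++ A').Chain' (Linked K Q α R)
      · exfalso
        have h1 : (A ++ A').length = ((A ++ A').length - 1) + 1 := by omega
        have := hL ((A ++ A').length - 1) (relPath_of_chain' Q α R h1 hch)
        omega
      · rw [PSet_zero_of_not_chain' Q α R hch hmem]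
        exact Submodule.zero_mem _
  have hone : (1 : BQAalpha K Q α R) ∈ U :=
    hmemU [] (by simp) 1 ⟨1, map_one _⟩
  have hspan : Submodule.span K U = ⊤ := by
    rw [eq_top_iff]
    intro x _
    obtain ⟨y, rfl⟩ := RingQuot.mkAlgHom_surjective K _ x
    show BQA.mk K (Q.alpha α) (inclFAalpha K Q α '' R) y ∈ Submodule.span K U
    induction y using FreeAlgebra.induction with
    | grade0 r =>
      have h1 : (BQA.mk K (Q.alpha α) (inclFAalpha K Q α '' R)) (algebraMap K _ r) = r • 1 := by
        rw [AlgHom.commutes, Algebra.algebraMap_eq_smul_one]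
      rw [h1]
      exact Submodule.smul_mem _ r (Submodule.subset_span hone)
    | grade1 x =>
      rcases x with v | (a | a)
      · have h1 : BQA.mk K (Q.alpha α) (inclFAalpha K Q α '' R) (FreeAlgebra.ι K (Sum.inl v)) =
            inclB Q α R (vtxIdem K Q R v) := by
          erw [inclB_vtx]; rfl
        rw [h1]
        exact Submodule.subset_span (hmemU [] (by simp) _ ⟨_, rfl⟩)
      · have h1 : BQA.mk K (Q.alpha α) (inclFAalpha K Q α '' R) (FreeAlgebra.ι K (Sum.inr (Sum.inl a))) =
            inclB Q α R (arrB Q R a) := by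
          rw [arrB, inclB_mk, incl_arr]; rfl
        rw [h1]
        exact Submodule.subset_span (hmemU [] (by simp) _ ⟨_, rfl⟩)
      · have hL1 : (1 : ℕ) ≤ L := hL 0 ⟨⟨fun _ => a, fun i => i.elim0⟩⟩
        have h1 : BQA.mk K (Q.alpha α) (inclFAalpha K Q α '' R) (FreeAlgebra.ι K (Sum.inr (Sum.inr a))) =
            inclB Q α R 1 * (newArrB Q α R a * 1) := by
          rw [map_one, one_mul, mul_one]; rfl
        rw [h1]
        refine Submodule.subset_span (hmemU [a] (by simpa) _ ?_)
        exact ⟨1, 1, ⟨1, map_one _⟩, rfl⟩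
    | mul x y hx hy =>
      rw [map_mul]
      have h2 : Submodule.span K U * Submodule.span K U ≤ Submodule.span K U := by
        rw [Submodule.span_mul_span, Submodule.span_le]
        rintro z ⟨u, hu, w, hw, rfl⟩
        exact hmul u hu w hw
      exact h2 (Submodule.mul_mem_mul (hx trivial) (hy trivial))
    | add x y hx hy =>
      rw [map_add]; exact Submodule.add_mem _ (hx trivial) (hy trivial)
  haveI : Finite {A : List (NewArrow Q α) // A.length ≤ L} := by
    have := (List.finite_length_le (NewArrow Q α) L)
    exact this.to_subtype
  haveI : ∀ A : {A : List (NewArrow Q α) // A.length ≤ L},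
      FiniteDimensional K (Submodule.span K (PSet Q α R A.1)) :=
    fun A => fd_PSet Q α R hAdm A.1
  have hfd : FiniteDimensional K (Submodule.span K U) := by
    rw [hU, Submodule.span_iUnion]
    exact Submodule.finiteDimensional_iSup _
  rw [hspan] at hfd
  haveI := hfd
  exact Module.Finite.equiv (Submodule.topEquiv)

end Span
end Stmt13
namespace Stmt13
section Rep

/-- Componentwise left multiplication as an algebra map to endomorphisms. -/
def lmulPi (K : Type) [Field K] (A : Type) [Ring A] [Algebra K A] (ι : Type) :
    A →ₐ[K] Module.End K (ι → A) where
  toFun b :=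
    { toFun := fun m i => b * m i
      map_add' := fun m m' => by funext i; simp [mul_add]
      map_smul' := fun c m => by funext i; simp [mul_smul_comm] }
  map_one' := by ext m i; simp
  map_mul' := fun b b' => by ext m i; simp [Module.End.mul_apply, mul_assoc]
  map_zero' := by ext m i; simp
  map_add' := fun b b' => by ext m i; simp [add_mul]
  commutes' := fun r => by
    ext m i
    simp [Module.algebraMap_end_apply, Algebra.smul_def]

lemma lmulPi_apply (K : Type) [Field K] (A : Type) [Ring A] [Algebra K A] (ι : Type)
    (b : A) (m : ι → A) (i : ι) : lmulPi K A ι b m i = b * m i := rfl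

lemma lmulPi_single (K : Type) [Field K] (A : Type) [Ring A] [Algebra K A]
    (ι : Type) [DecidableEq ι] (b : A) (k : ι) (v : A) :
    lmulPi K A ι b (Pi.single k v) = Pi.single k (b * v) := by
  funext c
  rcases eq_or_ne c k with rfl | h
  · simp [lmulPi_apply]
  · simp [lmulPi_apply, Pi.single_eq_of_ne h]

variable {K : Type} [Field K] (Q : QuiverData) (α : Q.V → Q.V → ℕ) (R : Set (FA K Q))
variable (n : ℕ) (A : Fin (n+1) → NewArrow Q α) (μ : Fin (n+1) → (BQA K Q R →ₗ[K] K))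

/-- The action of a new arrow on the module `Fin (n+2) → B`, as a function. -/
def NmapFun (a : NewArrow Q α) (m : Fin (n+2) → BQA K Q R) : Fin (n+2) → BQA K Q R :=
  fun c => ∑ i : Fin (n+1),
    if c = i.succ ∧ a = A i then
      μ i (vtxIdem K Q R a.src * m i.castSucc) • vtxIdem K Q R a.tgt else 0

lemma NmapFun_apply (a : NewArrow Q α) (m : Fin (n+2) → BQA K Q R) (c : Fin (n+2)) :
    NmapFun Q α R n A μ a m c = ∑ i : Fin (n+1),
      (if c = i.succ ∧ a = A i then
        μ i (vtxIdem K Q R a.src * m i.castSucc) • vtxIdem K Q R a.tgt else 0) := rfl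

/-- The action of a new arrow on the module `Fin (n+2) → B`. -/
def Nmap (a : NewArrow Q α) :
    (Fin (n+2) → BQA K Q R) →ₗ[K] (Fin (n+2) → BQA K Q R) where
  toFun := NmapFun Q α R n A μ a
  map_add' := fun m m' => by
    funext c
    rw [Pi.add_apply, NmapFun_apply, NmapFun_apply, NmapFun_apply, ← Finset.sum_add_distrib]
    refine Finset.sum_congr rfl fun i _ => ?_
    split_ifs with h
    · rw [Pi.add_apply, mul_add, map_add, add_smul]
    · rw [add_zero]
  map_smul' := fun r m => by
    funext c
    rw [Pi.smul_apply, NmapFun_apply, NmapFun_apply, Finset.smul_sum]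
    refine Finset.sum_congr rfl fun i _ => ?_
    split_ifs with h
    · rw [Pi.smul_apply, mul_smul_comm, map_smul, smul_assoc]
      rfl
    · rw [smul_zero]

lemma Nmap_apply (a : NewArrow Q α) (m : Fin (n+2) → BQA K Q R) (c : Fin (n+2)) :
    Nmap Q α R n A μ a m c = ∑ i : Fin (n+1),
      (if c = i.succ ∧ a = A i then
        μ i (vtxIdem K Q R a.src * m i.castSucc) • vtxIdem K Q R a.tgt else 0) := rfl

lemma Nmap_single (a : NewArrow Q α) (j : Fin (n+1)) (v : BQA K Q R) (ha : a = A j) :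
    Nmap Q α R n A μ a (Pi.single j.castSucc v) =
      Pi.single j.succ ((μ j (vtxIdem K Q R a.src * v)) • vtxIdem K Q R a.tgt) := by
  funext c
  rw [Nmap_apply]
  refine (Finset.sum_eq_single j ?_ ?_).trans ?_
  · intro i _ hij
    have hne : i.castSucc ≠ j.castSucc := by simpa [Fin.castSucc_inj] using hij
    have h0 : (Pi.single (j.castSucc) v : Fin (n+2) → BQA K Q R) (i.castSucc) = 0 := by
      rw [Pi.single_eq_of_ne hne]
    rw [h0, mul_zero, map_zero, zero_smul, ite_self]
  · intro h; exact absurd (Finset.mem_univ j) h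
  · rw [Pi.single_eq_same]
    rcases eq_or_ne c j.succ with rfl | hc
    · rw [if_pos ⟨rfl, ha⟩, Pi.single_eq_same]
    · rw [if_neg (fun h => hc h.1), Pi.single_eq_of_ne hc]

/-- generators of the representation of `B^α` on `Fin (n+2) → B` -/
def genMap : ((Q.alpha α).V ⊕ (Q.alpha α).E) → Module.End K (Fin (n+2) → BQA K Q R) :=
  fun x =>
    match x with
    | Sum.inl v => lmulPi K (BQA K Q R) (Fin (n+2)) (vtxIdem K Q R v)
    | Sum.inr (Sum.inl a) => lmulPi K (BQA K Q R) (Fin (n+2)) (arrB Q R a)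
    | Sum.inr (Sum.inr a) => Nmap Q α R n A μ a

lemma liftGen_incl (x : FA K Q) :
    FreeAlgebra.lift K (genMap Q α R n A μ) (inclFAalpha K Q α x) =
      lmulPi K (BQA K Q R) (Fin (n+2)) (BQA.mk K Q R x) := by
  have h : ((FreeAlgebra.lift K (genMap Q α R n A μ)).comp (inclFAalpha K Q α)) =
      ((lmulPi K (BQA K Q R) (Fin (n+2))).comp (BQA.mk K Q R)) := by
    apply FreeAlgebra.hom_ext
    funext x
    rcases x with v | a <;>
      simp only [AlgHom.coe_comp, Function.comp_apply, inclFAalpha,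
        FreeAlgebra.lift_ι_apply] <;> rfl
  exact AlgHom.congr_fun h x

lemma genMap_rel : ∀ ⦃x y : FA K (Q.alpha α)⦄,
    PathRel K (Q.alpha α) (inclFAalpha K Q α '' R) x y →
    FreeAlgebra.lift K (genMap Q α R n A μ) x = FreeAlgebra.lift K (genMap Q α R n A μ) y := by
  intro x y h
  set F := FreeAlgebra.lift K (genMap Q α R n A μ) with hF
  set LM := lmulPi K (BQA K Q R) (Fin (n+2)) with hLM
  have hvtx : ∀ v : (Q.alpha α).V, F ((Q.alpha α).vtx K v) = LM (vtxIdem K Q R v) := fun v => by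
    rw [QuiverData.vtx, hF, FreeAlgebra.lift_ι_apply]; rfl
  have harrL : ∀ a : Q.E, F ((Q.alpha α).arr K (Sum.inl a)) = LM (arrB Q R a) := fun a => by
    rw [hF]; exact FreeAlgebra.lift_ι_apply _ _
  have harrR : ∀ a : NewArrow Q α,
      F ((Q.alpha α).arr K (Sum.inr a)) = Nmap Q α R n A μ a := fun a => by
    rw [hF]; exact FreeAlgebra.lift_ι_apply _ _
  induction h with
  | vtx_mul i j =>
    rw [map_mul, hvtx, hvtx, ← map_mul]
    erw [vtx_mul_vtx]
    rw [apply_ite F, map_zero,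
      apply_ite LM, map_zero, hvtx]
    rfl
  | vtx_sum =>
    rw [map_sum, map_one]
    simp only [hvtx]
    erw [← map_sum]
    have hsum : (∑ v : (Q.alpha α).V, vtxIdem K Q R v) = 1 := sum_vtx Q R
    rw [hsum, map_one]
  | arr_t a =>
    rcases a with a | a
    · rw [map_mul, hvtx, harrL, ← map_mul]
      exact congrArg LM (vtx_t_mul_arr Q R a)
    · rw [map_mul, hvtx, harrR]
      apply LinearMap.ext
      intro m
      funext c
      show LM (vtxIdem K Q R a.tgt) (Nmap Q α R n A μ a m) c = Nmap Q α R n A μ a m c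
      rw [lmulPi_apply, Nmap_apply, Finset.mul_sum]
      refine Finset.sum_congr rfl fun i _ => ?_
      split_ifs with h
      · rw [mul_smul_comm, vtx_idem]
      · rw [mul_zero]
  | arr_s a =>
    rcases a with a | a
    · rw [map_mul, hvtx, harrL, ← map_mul]
      exact congrArg LM (arr_mul_vtx_s Q R a)
    · rw [map_mul, hvtx, harrR]
      apply LinearMap.ext
      intro m
      funext c
      show Nmap Q α R n A μ a (LM (vtxIdem K Q R a.src) m) c = Nmap Q α R n A μ a m c
      rw [Nmap_apply, Nmap_apply]
      refine Finset.sum_congr rfl fun i _ => ?_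
      split_ifs with h
      · rw [lmulPi_apply, ← mul_assoc, vtx_idem]
      · rfl
  | rel r hr =>
    obtain ⟨r', hr', rfl⟩ := hr
    rw [map_zero, hF, liftGen_incl, mkB_rel_zero Q R hr', map_zero]

/-- The representation of `B^α` on `Fin (n+2) → B`. -/
def rho : BQAalpha K Q α R →ₐ[K] Module.End K (Fin (n+2) → BQA K Q R) :=
  RingQuot.liftAlgHom K ⟨FreeAlgebra.lift K (genMap Q α R n A μ), genMap_rel Q α R n A μ⟩

lemma rho_newArrB (a : NewArrow Q α) :
    rho Q α R n A μ (newArrB Q α R a) = Nmap Q α R n A μ a := by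
  unfold newArrB arrB QuiverData.arr
  rw [BQA.mk, rho, RingQuot.liftAlgHom_mkAlgHom_apply,
    FreeAlgebra.lift_ι_apply]
  rfl

lemma rho_inclB (x : BQA K Q R) :
    rho Q α R n A μ (inclB Q α R x) = lmulPi K (BQA K Q R) (Fin (n+2)) x := by
  obtain ⟨y, rfl⟩ := RingQuot.mkAlgHom_surjective K _ x
  show rho Q α R n A μ (inclB Q α R (BQA.mk K Q R y)) = _
  rw [inclB_mk, BQA.mk, rho, RingQuot.liftAlgHom_mkAlgHom_apply]
  exact liftGen_incl Q α R n A μ y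

end Rep
end Stmt13
namespace Stmt13
section PartA
variable {K : Type} [Field K]

lemma exists_functional {V : Type} [AddCommGroup V] [Module K V] {v : V} (hv : v ≠ 0) :
    ∃ φ : V →ₗ[K] K, φ v = 1 := by
  have h : ¬ ∀ φ : Module.Dual K V, φ v = 0 := by
    rw [Module.forall_dual_apply_eq_zero_iff]
    exact hv
  push_neg at h
  obtain ⟨φ, hφ⟩ := h
  refine ⟨(φ v)⁻¹ • φ, ?_⟩
  rw [LinearMap.smul_apply, smul_eq_mul, inv_mul_cancel₀ hφ]

variable (Q : QuiverData) (α : Q.V → Q.V → ℕ) (R : Set (FA K Q))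

theorem relPath_le_finrank (hR : RelationsOK K Q R) {n : ℕ} (γ : RelPath K Q α R n)
    (hfd : FiniteDimensional K (BQAalpha K Q α R)) :
    n + 1 ≤ Module.finrank K (BQAalpha K Q α R) := by
  classical
  have hlink : ∀ i : Fin n, ∃ b : BQA K Q R,
      vtxIdem K Q R (γ.arr i.succ).src * b * vtxIdem K Q R (γ.arr i.castSucc).tgt ≠ 0 :=
    γ.linked
  choose bb hbb using hlink
  set w : Fin (n+1) → BQA K Q R :=
    Fin.cases (vtxIdem K Q R (γ.arr 0).src)
      (fun j => vtxIdem K Q R (γ.arr j.succ).src * bb j *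
        vtxIdem K Q R (γ.arr j.castSucc).tgt) with hwdef
  have hw0 : w 0 = vtxIdem K Q R (γ.arr 0).src := rfl
  have hwS : ∀ j : Fin n, w j.succ = vtxIdem K Q R (γ.arr j.succ).src * bb j *
      vtxIdem K Q R (γ.arr j.castSucc).tgt := fun j => rfl
  have hw : ∀ i, w i ≠ 0 := by
    intro i
    induction i using Fin.cases with
    | zero => rw [hw0]; exact vtxIdem_ne_zero Q R hR _
    | succ j => rw [hwS j]; exact hbb j
  have hμ0 := fun i => exists_functional (K := K) (hw i)
  choose μ hμ using hμ0
  set ρ := rho Q α R n γ.arr μ with hρ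
  set m₀ : Fin (n+2) → BQA K Q R := Pi.single 0 (vtxIdem K Q R (γ.arr 0).src) with hm₀
  set z : ℕ → BQAalpha K Q α R := fun j =>
    Nat.rec (newArrB Q α R (γ.arr 0))
      (fun j ih => if h : j < n then
          newArrB Q α R (γ.arr (⟨j, h⟩ : Fin n).succ) * (inclB Q α R (bb ⟨j, h⟩) * ih)
        else ih) j with hz
  have hev : ∀ j : Fin (n+1), ρ (z j.val) m₀ =
      Pi.single (j.succ) (vtxIdem K Q R (γ.arr j).tgt) := by
    intro j
    induction j using Fin.induction with
    | zero =>
      show (ρ (newArrB Q α R (γ.arr 0))) m₀ = _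
      rw [hρ, rho_newArrB]
      have hm : m₀ = Pi.single ((0 : Fin (n+1)).castSucc) (vtxIdem K Q R (γ.arr 0).src) := by
        rw [hm₀, Fin.castSucc_zero]
      rw [hm, Nmap_single Q α R n γ.arr μ _ 0 _ rfl, vtx_idem]
      rw [← hw0, hμ 0, one_smul]
    | succ i ih =>
      have hzi : z (i.val + 1) =
          newArrB Q α R (γ.arr i.succ) * (inclB Q α R (bb i) * z i.val) := by
        have h1 : z (i.val + 1) = if h : i.val < n then
            newArrB Q α R (γ.arr (⟨i.val, h⟩ : Fin n).succ) *
              (inclB Q α R (bb ⟨i.val, h⟩) * z i.val) else z i.val := rfl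
        rw [h1, dif_pos i.isLt, Fin.eta]
      show (ρ (z (i.val + 1))) m₀ =
        Pi.single (i.succ.succ) (vtxIdem K Q R (γ.arr i.succ).tgt)
      rw [hzi, map_mul, map_mul, Module.End.mul_apply, Module.End.mul_apply]
      have ih' : ρ (z i.val) m₀ =
          Pi.single (i.castSucc).succ (vtxIdem K Q R (γ.arr i.castSucc).tgt) := ih
      rw [ih', hρ, rho_inclB, rho_newArrB, lmulPi_single, Fin.succ_castSucc,
        Nmap_single Q α R n γ.arr μ _ i.succ _ rfl]
      have hwsucc := hwS i
      rw [mul_assoc] at hwsucc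
      rw [← hwsucc, hμ i.succ, one_smul]
  -- evaluation linear map
  set E : BQAalpha K Q α R →ₗ[K] (Fin (n+2) → BQA K Q R) :=
    { toFun := fun x => ρ x m₀
      map_add' := fun x y => by rw [map_add, LinearMap.add_apply]
      map_smul' := fun c x => by
        rw [map_smul, LinearMap.smul_apply, RingHom.id_apply] } with hE
  have hLI : LinearIndependent K (fun j : Fin (n+1) => z j.val) := by
    rw [Fintype.linearIndependent_iff]
    intro g hg i
    have h1 : E (∑ j : Fin (n+1), g j • z j.val) = 0 := by rw [hg, map_zero]
    rw [map_sum] at h1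
    have h2 : ∑ j : Fin (n+1), g j •
        (Pi.single (j.succ) (vtxIdem K Q R (γ.arr j).tgt) : Fin (n+2) → BQA K Q R) = 0 := by
      rw [← h1]
      refine (Finset.sum_congr rfl fun j _ => ?_).symm
      rw [map_smul]
      have : E (z j.val) = Pi.single (j.succ) (vtxIdem K Q R (γ.arr j).tgt) := hev j
      rw [this]
    have h3 := congrFun h2 (i.succ)
    rw [Finset.sum_apply] at h3
    rw [Finset.sum_eq_single i] at h3
    · rw [Pi.smul_apply, Pi.single_eq_same, Pi.zero_apply] at h3
      rcases smul_eq_zero.mp h3 with h | h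
      · exact h
      · exact absurd h (vtxIdem_ne_zero Q R hR _)
    · intro j _ hji
      have hne : i.succ ≠ j.succ := fun hc => hji (Fin.succ_injective _ hc).symm
      rw [Pi.smul_apply, Pi.single_eq_of_ne hne, smul_zero]
    · intro hmem; exact absurd (Finset.mem_univ i) hmem
  have hcard := hLI.fintype_card_le_finrank
  simpa using hcard

end PartA
end Stmt13
namespace Stmt13
section PartC
variable {K : Type} [Field K] (Q : QuiverData) (α : Q.V → Q.V → ℕ) (R : Set (FA K Q))

lemma relPath_of_cycle {n : ℕ} (γ : RelPath K Q α R n) (hc : γ.IsCycle) (m : ℕ) :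
    Nonempty (RelPath K Q α R m) := by
  have main : ∀ a b : Fin (n+1), (b.val + 1) % (n + 1) = a.val →
      Linked K Q α R (γ.arr a) (γ.arr b) := by
    intro a b hab
    rcases eq_or_ne b.val n with hb | hb
    · have ha : a = 0 := by
        apply Fin.ext
        rw [← hab, hb]
        simp
      have hbl : b = Fin.last n := by apply Fin.ext; simpa using hb
      rw [ha, hbl]
      exact hc
    · have hbn : b.val < n := by omega
      have ha : a = (⟨b.val, hbn⟩ : Fin n).succ := by
        apply Fin.ext
        rw [← hab]
        exact Nat.mod_eq_of_lt (by omega)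
      have hlk := γ.linked ⟨b.val, hbn⟩
      have hb2 : (⟨b.val, hbn⟩ : Fin n).castSucc = b := by apply Fin.ext; rfl
      rw [← ha, hb2] at hlk
      exact hlk
  refine ⟨⟨fun i => γ.arr ⟨i.val % (n+1), Nat.mod_lt _ (by omega)⟩, ?_⟩⟩
  intro i
  exact main _ _ (Nat.mod_add_mod _ _ _)

lemma bounded_of_no_cycle (h : ¬ ∃ (n : ℕ) (γ : RelPath K Q α R n), γ.IsCycle) :
    ∀ n : ℕ, Nonempty (RelPath K Q α R n) → n + 1 ≤ Fintype.card (NewArrow Q α) := by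
  intro n hne
  obtain ⟨γ⟩ := hne
  by_contra hlt
  push_neg at hlt
  have key : ∀ (i j : Fin (n+1)), i < j → γ.arr i = γ.arr j → False := by
    intro i j hij heq
    have hd : 1 ≤ j.val - i.val := by omega
    have hjn : j.val ≤ n := by omega
    refine h ⟨j.val - i.val - 1,
      ⟨fun k => γ.arr ⟨i.val + k.val, by omega⟩, ?_⟩, ?_⟩
    · intro k
      have hkk : k.val < j.val - i.val - 1 := k.isLt
      have hk : i.val + k.val < n := by omega
      have hlk := γ.linked ⟨i.val + k.val, hk⟩
      have e1 : (⟨i.val + k.val, hk⟩ : Fin n).succ =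
          (⟨i.val + ((k.succ : Fin (j.val - i.val - 1 + 1)).val), by omega⟩ : Fin (n+1)) := by
        apply Fin.ext
        show i.val + k.val + 1 = i.val + (k.val + 1)
        omega
      have e2 : (⟨i.val + k.val, hk⟩ : Fin n).castSucc =
          (⟨i.val + ((k.castSucc : Fin (j.val - i.val - 1 + 1)).val), by omega⟩ : Fin (n+1)) := by
        apply Fin.ext
        rfl
      rw [e1, e2] at hlk
      exact hlk
    · show Linked K Q α R
        (γ.arr ⟨i.val + ((0 : Fin (j.val - i.val - 1 + 1)).val), by omega⟩)
        (γ.arr ⟨i.val + ((Fin.last (j.val - i.val - 1)).val), by omega⟩)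
      have hj1 : j.val - 1 < n := by omega
      have hlk := γ.linked ⟨j.val - 1, hj1⟩
      have e3 : (⟨j.val - 1, hj1⟩ : Fin n).succ = j := by
        apply Fin.ext
        show j.val - 1 + 1 = j.val
        omega
      have e4 : (⟨j.val - 1, hj1⟩ : Fin n).castSucc =
          (⟨i.val + ((Fin.last (j.val - i.val - 1)).val), by omega⟩ : Fin (n+1)) := by
        apply Fin.ext
        show j.val - 1 = i.val + (j.val - i.val - 1)
        omega
      have e5 : (⟨i.val + ((0 : Fin (j.val - i.val - 1 + 1)).val), by omega⟩ : Fin (n+1)) = i := by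
        apply Fin.ext
        show i.val + 0 = i.val
        omega
      rw [e3, e4] at hlk
      rw [e5, heq]
      exact hlk
  have hinj : Function.Injective γ.arr := by
    intro i j hij
    by_contra hne
    rcases lt_or_gt_of_ne hne with h' | h'
    · exact key i j h' hij
    · exact key j i h' hij.symm
  have := Fintype.card_le_of_injective _ hinj
  rw [Fintype.card_fin] at this
  omega

lemma bounded_iff_no_cycle :
    (∃ L : ℕ, ∀ n : ℕ, Nonempty (RelPath K Q α R n) → n + 1 ≤ L) ↔
      ¬ ∃ (n : ℕ) (γ : RelPath K Q α R n), γ.IsCycle := by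
  constructor
  · rintro ⟨L, hL⟩ ⟨n, γ, hc⟩
    have h1 := hL L (relPath_of_cycle Q α R γ hc L)
    omega
  · intro h
    exact ⟨Fintype.card (NewArrow Q α), bounded_of_no_cycle Q α R h⟩

end PartC
end Stmt13

theorem finiteDimensional_alpha_iff_bounded_iff_no_relative_cycles
    (K : Type) [Field K] (Q : QuiverData) (R : Set (FA K Q))
    (hBound : BoundQuiverAlgebra K Q R) (α : Q.V → Q.V → ℕ) :
    (FiniteDimensional K (BQAalpha K Q α R) ↔
      ∃ L : ℕ, ∀ n : ℕ, Nonempty (RelPath K Q α R n) → n + 1 ≤ L) ∧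
    ((∃ L : ℕ, ∀ n : ℕ, Nonempty (RelPath K Q α R n) → n + 1 ≤ L) ↔
      ¬ ∃ (n : ℕ) (γ : RelPath K Q α R n), γ.IsCycle) := by
  obtain ⟨hfin, hROK, hAdm⟩ := hBound
  constructor
  · constructor
    · intro hfd
      exact ⟨Module.finrank K (BQAalpha K Q α R),
        fun n hn => hn.elim fun γ => Stmt13.relPath_le_finrank Q α R hROK γ hfd⟩
    · rintro ⟨L, hL⟩
      exact Stmt13.finiteDimensional_BQAalpha Q α R hAdm hL
  · exact Stmt13.bounded_iff_no_cycle Q α R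
end
end
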